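/- arXiv:2303.17535 — 6 statements merged into one kernel-verified Lean document; each statement's English description precedes it below -/
import Mathlib

section
/- Let k ≥ 1 and m ≥ 1 be integers, let V be a finite linearly ordered set, and let X be an abstract simplicial complex on V having exactly m maximal k-faces (maximal faces with k+1 elements). Let X' be the simplicial complex obtained from X by deleting all m of these maximal k-faces. If β_k(X) < m, then β_{k−1}(X') ≥ 1. -/
variable {V : Type*} [Fintype V] [LinearOrder V]

/-- The space of `(d−1)`-dimensional cochains (functions on faces with `d` elements),
where the empty set is allowed as the unique face with `0` elements, so that
`Coch X 0 ≅ ℚ` plays the role of `C^{−1}(X) = ℚ` in reduced cohomology. -/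
abbrev Coch (X : Finset (Finset V)) (d : ℕ) : Type _ :=
  {σ : Finset V // σ.card = d ∧ (σ ∈ X ∨ σ = ∅)} → ℚ

/-- The simplicial coboundary map: for a face `σ = {v_0 < … < v_d}` with `d+1` elements,
`(δ f)(σ) = Σ_i (−1)^i f(σ ∖ {v_i})`. For `d = 0` this is the augmentation
`ℚ → C^0`, `a ↦ constant a`. -/
noncomputable def delta (X : Finset (Finset V)) (d : ℕ) :
    Coch X d →ₗ[ℚ] Coch X (d + 1) where
  toFun f σ := ∑ v ∈ σ.1,
    (-1 : ℚ) ^ ((σ.1.filter (fun w => w < v)).card) *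
      (if h : (σ.1.erase v).card = d ∧ ((σ.1.erase v) ∈ X ∨ σ.1.erase v = ∅) then
        f ⟨σ.1.erase v, h⟩ else 0)
  map_add' f g := by
    funext σ
    simp only [Pi.add_apply]
    rw [← Finset.sum_add_distrib]
    refine Finset.sum_congr rfl fun v _ => ?_
    by_cases h : (σ.1.erase v).card = d ∧ ((σ.1.erase v) ∈ X ∨ σ.1.erase v = ∅)
    · simp [h, mul_add]
    · simp [h]
  map_smul' a f := by
    funext σ
    simp only [RingHom.id_apply, Pi.smul_apply, smul_eq_mul, Finset.mul_sum]
    refine Finset.sum_congr rfl fun v _ => ?_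
    by_cases h : (σ.1.erase v).card = d ∧ ((σ.1.erase v) ∈ X ∨ σ.1.erase v = ∅)
    · simp only [dif_pos h, Pi.smul_apply, smul_eq_mul]; ring
    · simp [h]

/-- The `j`-th reduced Betti number over `ℚ`: the dimension of
`ker δ^j / im δ^{j−1}` (where `δ^{−1} : ℚ → C^0` sends `a` to the constant `a`). -/
noncomputable def betti (X : Finset (Finset V)) (j : ℕ) : ℕ :=
  Module.finrank ℚ
    (↥(LinearMap.ker (delta X (j + 1))) ⧸
      Submodule.comap (LinearMap.ker (delta X (j + 1))).subtype
        (LinearMap.range (delta X j)))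

/-- The set of maximal faces of `X` with `k+1` elements. -/
def maxKFaces (X : Finset (Finset V)) (k : ℕ) : Finset (Finset V) :=
  X.filter (fun A => A.card = k + 1 ∧ ∀ B ∈ X, A ⊆ B → B = A)


section Helpers

variable {V : Type*} [Fintype V] [LinearOrder V]

private noncomputable def sg (σ : Finset V) (v : V) : ℚ :=
  (-1 : ℚ) ^ ((σ.filter (fun w => w < v)).card)

private lemma delta_apply (X : Finset (Finset V)) (d : ℕ) (f : Coch X d)
    (σ : {σ : Finset V // σ.card = d + 1 ∧ (σ ∈ X ∨ σ = ∅)}) :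
    delta X d f σ = ∑ v ∈ σ.1, sg σ.1 v *
      (if h : (σ.1.erase v).card = d ∧ ((σ.1.erase v) ∈ X ∨ σ.1.erase v = ∅) then
        f ⟨σ.1.erase v, h⟩ else 0) := rfl

private lemma sg_anti {σ : Finset V} {v w : V} (hw : w ∈ σ) (h : w < v) :
    sg σ v * sg (σ.erase v) w = -(sg σ w * sg (σ.erase w) v) := by
  have h1 : (σ.erase v).filter (fun x => x < w) = σ.filter (fun x => x < w) := by
    rw [Finset.filter_erase]
    exact Finset.erase_eq_of_notMem (by simp [not_lt.mpr h.le])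
  have h2 : (σ.erase w).filter (fun x => x < v) = (σ.filter (fun x => x < v)).erase w :=
    Finset.filter_erase _ _ _
  have hwmem : w ∈ σ.filter (fun x => x < v) := Finset.mem_filter.mpr ⟨hw, h⟩
  obtain ⟨c, hc⟩ : ∃ c, (σ.filter (fun x => x < v)).card = c + 1 :=
    ⟨_, (Nat.succ_pred_eq_of_pos (Finset.card_pos.mpr ⟨w, hwmem⟩)).symm⟩
  unfold sg
  rw [h1, h2, Finset.card_erase_of_mem hwmem, hc]
  simp [pow_succ]
  ring

private lemma dd (X : Finset (Finset V)) (hdc : ∀ A ∈ X, ∀ B ⊆ A, B.Nonempty → B ∈ X)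
    (d : ℕ) (f : Coch X d) : delta X (d + 1) (delta X d f) = 0 := by
  funext σ
  obtain ⟨hcard, hmem⟩ := σ.2
  have hσX : σ.1 ∈ X := by
    rcases hmem with h | h
    · exact h
    · exfalso; rw [h] at hcard; simp at hcard
  have hG1 : ∀ v ∈ σ.1,
      (σ.1.erase v).card = d + 1 ∧ ((σ.1.erase v) ∈ X ∨ σ.1.erase v = ∅) := by
    intro v hv
    have hc : (σ.1.erase v).card = d + 1 := by
      simp [Finset.card_erase_of_mem hv, hcard]
    refine ⟨hc, Or.inl (hdc _ hσX _ (Finset.erase_subset _ _) ?_)⟩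
    rw [← Finset.card_pos, hc]; omega
  set F : V → V → ℚ := fun v w => sg σ.1 v * sg (σ.1.erase v) w *
      (if h : ((σ.1.erase v).erase w).card = d ∧
          (((σ.1.erase v).erase w) ∈ X ∨ (σ.1.erase v).erase w = ∅) then
        f ⟨(σ.1.erase v).erase w, h⟩ else 0) with hF
  have step : ∀ v ∈ σ.1, sg σ.1 v *
      (if h : (σ.1.erase v).card = d + 1 ∧ ((σ.1.erase v) ∈ X ∨ σ.1.erase v = ∅) then
        delta X d f ⟨σ.1.erase v, h⟩ else 0) = ∑ w ∈ σ.1.erase v, F v w := by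
    intro v hv
    rw [dif_pos (hG1 v hv), delta_apply, Finset.mul_sum]
    exact Finset.sum_congr rfl fun w hw => by rw [hF]; ring
  have hanti : ∀ v ∈ σ.1, ∀ w ∈ σ.1.erase v, F v w = -F w v := by
    intro v hv w hw
    obtain ⟨hne, hwσ⟩ := Finset.mem_erase.mp hw
    have hset : (σ.1.erase w).erase v = (σ.1.erase v).erase w := Finset.erase_right_comm
    have hsgn : sg σ.1 v * sg (σ.1.erase v) w = -(sg σ.1 w * sg (σ.1.erase w) v) := by
      rcases lt_or_gt_of_ne hne with hlt | hgt
      · exact sg_anti hwσ hlt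
      · have := sg_anti hv hgt
        linarith
    rw [hF]
    simp only [hset, hsgn]
    ring
  have hrw : (delta X (d + 1) (delta X d f)) σ = ∑ v ∈ σ.1, ∑ w ∈ σ.1.erase v, F v w := by
    rw [delta_apply]
    exact Finset.sum_congr rfl step
  have hswap : (∑ v ∈ σ.1, ∑ w ∈ σ.1.erase v, F v w)
      = ∑ w ∈ σ.1, ∑ v ∈ σ.1.erase w, F v w :=
    Finset.sum_comm' (by
      intro x y
      simp only [Finset.mem_erase]
      tauto)
  have hzero : (∑ v ∈ σ.1, ∑ w ∈ σ.1.erase v, F v w) = 0 := by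
    have hneg : (∑ w ∈ σ.1, ∑ v ∈ σ.1.erase w, F v w)
        = -∑ w ∈ σ.1, ∑ v ∈ σ.1.erase w, F w v := by
      rw [← Finset.sum_neg_distrib]
      refine Finset.sum_congr rfl fun w hw => ?_
      rw [← Finset.sum_neg_distrib]
      exact Finset.sum_congr rfl fun v hv => by rw [hanti w hw v hv]; ring
    have : (∑ v ∈ σ.1, ∑ w ∈ σ.1.erase v, F v w)
        = -∑ v ∈ σ.1, ∑ w ∈ σ.1.erase v, F v w := by
      conv_lhs => rw [hswap, hneg]
    linarith
  rw [Pi.zero_apply, hrw, hzero]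

end Helpers

/-- Let `k ≥ 1`, `m ≥ 1`, let `X` be an abstract simplicial complex on a
finite linearly ordered vertex set with exactly `m` maximal `k`-faces, and let `X'` be
obtained from `X` by deleting all of these maximal `k`-faces.
If `β_k(X) < m` then `β_{k−1}(X') ≥ 1`. -/
theorem betti_pred_removed_ge_one_of_lt {V : Type*} [Fintype V] [LinearOrder V]
    (k m : ℕ) (hk : 1 ≤ k) (hm1 : 1 ≤ m)
    (X : Finset (Finset V))
    (hne : ∀ A ∈ X, A.Nonempty)
    (hdc : ∀ A ∈ X, ∀ B ⊆ A, B.Nonempty → B ∈ X)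
    (hm : (maxKFaces X k).card = m)
    (hb : betti X k < m) :
    1 ≤ betti (X \ maxKFaces X k) (k - 1) := by
  obtain ⟨j, rfl⟩ : ∃ j, k = j + 1 := ⟨k - 1, (Nat.sub_add_cancel hk).symm⟩
  clear hk hm1 hne
  set M := maxKFaces X (j + 1) with hMdef
  have hMcard : ∀ σ ∈ M, σ.card = j + 2 := fun σ h => (Finset.mem_filter.mp h).2.1
  have hMmax : ∀ σ ∈ M, ∀ B ∈ X, σ ⊆ B → B = σ := fun σ h => (Finset.mem_filter.mp h).2.2
  have hMX : ∀ σ ∈ M, σ ∈ X := fun σ h => (Finset.mem_filter.mp h).1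
  have hX'X : ∀ s ∈ X \ M, s ∈ X := fun s h => (Finset.mem_sdiff.mp h).1
  have hXX' : ∀ s ∈ X, s.card ≠ j + 2 → s ∈ X \ M := fun s h hc =>
    Finset.mem_sdiff.mpr ⟨h, fun hm' => hc (hMcard s hm')⟩
  -- the indicator cocycles
  set E : {σ : Finset V // σ ∈ M} → Coch X (j + 2) :=
    fun σ τ => if τ.1 = σ.1 then 1 else 0 with hE
  have hEker : ∀ σ, delta X (j + 2) (E σ) = 0 := by
    intro σ
    funext τ
    rw [Pi.zero_apply, delta_apply]
    refine Finset.sum_eq_zero fun v hv => ?_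
    by_cases hG : (τ.1.erase v).card = j + 2 ∧ ((τ.1.erase v) ∈ X ∨ τ.1.erase v = ∅)
    · rw [dif_pos hG, hE]
      have : ¬ (τ.1.erase v = σ.1) := by
        intro heq
        have hτX : τ.1 ∈ X := by
          rcases τ.2.2 with h | h
          · exact h
          · exfalso
            have := τ.2.1
            rw [h] at this
            simp at this
        have hsub : σ.1 ⊆ τ.1 := heq ▸ Finset.erase_subset _ _
        have := hMmax σ.1 σ.2 τ.1 hτX hsub
        have h1 := τ.2.1
        have h2 := hMcard σ.1 σ.2
        rw [this] at h1
        omega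
      simp [this]
    · rw [dif_neg hG, mul_zero]
  -- linear combinations of indicator cocycles
  set c : ({σ : Finset V // σ ∈ M} → ℚ) → Coch X (j + 2) :=
    fun a => ∑ σ : {σ : Finset V // σ ∈ M}, a σ • E σ with hcdef
  have hc_ker : ∀ a, delta X (j + 2) (c a) = 0 := by
    intro a
    rw [hcdef]
    simp only [map_sum, map_smul, hEker, smul_zero, Finset.sum_const_zero]
  have hc_eval : ∀ (a) (σ : {σ : Finset V // σ ∈ M}),
      c a ⟨σ.1, hMcard σ.1 σ.2, Or.inl (hMX σ.1 σ.2)⟩ = a σ := by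
    intro a σ
    rw [hcdef]
    simp only [Finset.sum_apply, Pi.smul_apply, hE, smul_eq_mul]
    rw [Finset.sum_eq_single σ]
    · simp
    · intro b _ hb
      have : ¬ ((σ : Finset V) = b.1) := fun h => hb (Subtype.ext h.symm)
      simp [this]
    · simp
  -- find a nonzero dependency
  have hdep : ∃ a : {σ : Finset V // σ ∈ M} → ℚ, a ≠ 0 ∧
      c a ∈ LinearMap.range (delta X (j + 1)) := by
    by_contra hcon
    push_neg at hcon
    set K := LinearMap.ker (delta X (j + 2)) with hK
    set N := Submodule.comap K.subtype (LinearMap.range (delta X (j + 1))) with hN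
    set cL : ({σ : Finset V // σ ∈ M} → ℚ) →ₗ[ℚ] Coch X (j + 2) :=
      { toFun := c
        map_add' := by
          intro a b
          show c (a + b) = c a + c b
          rw [hcdef]
          simp [add_smul, Finset.sum_add_distrib]
        map_smul' := by
          intro r a
          show c (r • a) = r • c a
          rw [hcdef]
          simp [Finset.smul_sum, smul_smul] } with hcL
    set φ : ({σ : Finset V // σ ∈ M} → ℚ) →ₗ[ℚ] (K ⧸ N) :=
      N.mkQ.comp (cL.codRestrict K (fun a => LinearMap.mem_ker.mpr (hc_ker a))) with hφ
    have hinj : Function.Injective φ := by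
      rw [← LinearMap.ker_eq_bot]
      rw [Submodule.eq_bot_iff]
      intro a ha
      rw [LinearMap.mem_ker, hφ] at ha
      simp only [LinearMap.comp_apply, Submodule.mkQ_apply] at ha
      rw [Submodule.Quotient.mk_eq_zero, hN, Submodule.mem_comap] at ha
      by_contra ha0
      exact hcon a ha0 ha
    have hle := LinearMap.finrank_le_finrank_of_injective hinj
    rw [Module.finrank_fintype_fun_eq_card] at hle
    rw [Fintype.card_coe, hm] at hle
    have : betti X (j + 1) = Module.finrank ℚ (K ⧸ N) := rfl
    omega
  obtain ⟨a, ha0, g, hg⟩ := hdep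
  -- the transferred cochain on X' = X \ M
  set g' : Coch (X \ M) (j + 1) := fun τ => g ⟨τ.1, τ.2.1, by
    rcases τ.2.2 with h | h
    · exact Or.inl (hX'X _ h)
    · exact Or.inr h⟩ with hg'
  have hdc' : ∀ A ∈ X \ M, ∀ B ⊆ A, B.Nonempty → B ∈ X \ M := by
    intro A hA B hBA hBne
    have hBX : B ∈ X := hdc A (hX'X A hA) B hBA hBne
    refine Finset.mem_sdiff.mpr ⟨hBX, fun hBM => ?_⟩
    have := hMmax B hBM A (hX'X A hA) hBA
    exact (Finset.mem_sdiff.mp hA).2 (this ▸ hBM)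
  -- g' is a cocycle in X'
  have hg'ker : delta (X \ M) (j + 1) g' = 0 := by
    funext τ
    have hτX' : τ.1 ∈ X \ M := by
      rcases τ.2.2 with h | h
      · exact h
      · exfalso
        have := τ.2.1
        rw [h] at this
        simp at this
    have hτX : τ.1 ∈ X := hX'X _ hτX'
    have hτM : τ.1 ∉ M := (Finset.mem_sdiff.mp hτX').2
    have heq : (delta (X \ M) (j + 1) g') τ
        = (delta X (j + 1) g) ⟨τ.1, τ.2.1, Or.inl hτX⟩ := by
      rw [delta_apply, delta_apply]
      refine Finset.sum_congr rfl fun v hv => ?_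
      congr 1
      have hiff : ((τ.1.erase v).card = j + 1 ∧ ((τ.1.erase v) ∈ X \ M ∨ τ.1.erase v = ∅))
          ↔ ((τ.1.erase v).card = j + 1 ∧ ((τ.1.erase v) ∈ X ∨ τ.1.erase v = ∅)) := by
        constructor
        · rintro ⟨h1, h2 | h2⟩
          · exact ⟨h1, Or.inl (hX'X _ h2)⟩
          · exact ⟨h1, Or.inr h2⟩
        · rintro ⟨h1, h2 | h2⟩
          · exact ⟨h1, Or.inl (hXX' _ h2 (by omega))⟩
          · exact ⟨h1, Or.inr h2⟩
      by_cases hP : (τ.1.erase v).card = j + 1 ∧ ((τ.1.erase v) ∈ X \ M ∨ τ.1.erase v = ∅)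
      · rw [dif_pos hP, dif_pos (hiff.mp hP)]
      · rw [dif_neg hP, dif_neg (fun h => hP (hiff.mpr h))]
    rw [Pi.zero_apply, heq, hg]
    rw [hcdef]
    simp only [Finset.sum_apply, Pi.smul_apply, hE, smul_eq_mul]
    refine Finset.sum_eq_zero fun σ _ => ?_
    have : ¬ (τ.1 = σ.1) := fun h => hτM (h ▸ σ.2)
    simp [this]
  -- now the conclusion
  show 1 ≤ betti (X \ M) ((j + 1) - 1)
  have hshow : betti (X \ M) ((j + 1) - 1) = betti (X \ M) j := rfl
  rw [hshow]
  unfold betti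
  set K' := LinearMap.ker (delta (X \ M) (j + 1)) with hK'
  set N' := Submodule.comap K'.subtype (LinearMap.range (delta (X \ M) j)) with hN'
  have hnt : Nontrivial (K' ⧸ N') := by
    refine nontrivial_of_ne (Submodule.Quotient.mk ⟨g', LinearMap.mem_ker.mpr hg'ker⟩) 0 ?_
    intro heq
    rw [Submodule.Quotient.mk_eq_zero, hN', Submodule.mem_comap] at heq
    obtain ⟨h, hh⟩ := heq
    set ht : Coch X j := fun τ => h ⟨τ.1, τ.2.1, by
      rcases τ.2.2 with hx | hx
      · exact Or.inl (hXX' _ hx (by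
          have := τ.2.1
          omega))
      · exact Or.inr hx⟩ with hht
    have hdh : delta X j ht = g := by
      funext τ
      have hτX : τ.1 ∈ X := by
        rcases τ.2.2 with hx | hx
        · exact hx
        · exfalso
          have := τ.2.1
          rw [hx] at this
          simp at this
      have hτX' : τ.1 ∈ X \ M := hXX' _ hτX (by
        have := τ.2.1
        omega)
      have heq2 : (delta X j ht) τ
          = (delta (X \ M) j h) ⟨τ.1, τ.2.1, Or.inl hτX'⟩ := by
        rw [delta_apply, delta_apply]
        refine Finset.sum_congr rfl fun v hv => ?_
        congr 1
        have hiff : ((τ.1.erase v).card = j ∧ ((τ.1.erase v) ∈ X ∨ τ.1.erase v = ∅))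
            ↔ ((τ.1.erase v).card = j ∧ ((τ.1.erase v) ∈ X \ M ∨ τ.1.erase v = ∅)) := by
          constructor
          · rintro ⟨h1, h2 | h2⟩
            · exact ⟨h1, Or.inl (hXX' _ h2 (by omega))⟩
            · exact ⟨h1, Or.inr h2⟩
          · rintro ⟨h1, h2 | h2⟩
            · exact ⟨h1, Or.inl (hX'X _ h2)⟩
            · exact ⟨h1, Or.inr h2⟩
        by_cases hP : (τ.1.erase v).card = j ∧ ((τ.1.erase v) ∈ X ∨ τ.1.erase v = ∅)
        · rw [dif_pos hP, dif_pos (hiff.mp hP)]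
        · rw [dif_neg hP, dif_neg (fun hx => hP (hiff.mpr hx))]
      rw [heq2]
      have := congrFun hh ⟨τ.1, τ.2.1, Or.inl hτX'⟩
      rw [Submodule.coe_subtype] at this
      rw [this]
    have hzero : c a = 0 := by
      rw [← hg, ← hdh]
      exact dd X hdc j ht
    obtain ⟨σ₀, hσ₀⟩ := Function.ne_iff.mp ha0
    have := hc_eval a σ₀
    rw [hzero] at this
    simp at this
    exact hσ₀ this.symm
  exact Module.finrank_pos_iff.mpr hnt
end

section
/- Let k ≥ 1 and n ≥ k+2 be integers and t ∈ [0,1]. In the random clique complex model, define the event A := {U({1,2}) > t} ∩ {U({l,m}) ≤ U({1,2}) for all 1 ≤ l < m ≤ k+1} ∩ ⋂_{p=k+2}^{n} {U({p,l}) > U({1,2}) for some 1 ≤ l ≤ k+1}. Then P(A) = ∫_t^1 s^{C(k+1,2) − 1} (1 − s^{k+1})^{n−k−1} ds, where C(k+1,2) = (k+1)k/2. -/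
open MeasureTheory

/-- Index type: unordered pairs of distinct elements of `Fin n`. -/
abbrev EdgeIdx (n : ℕ) := {e : Sym2 (Fin n) // ¬ e.IsDiag}

noncomputable instance (n : ℕ) : Fintype (EdgeIdx n) := Fintype.ofFinite _

/-- Uniform probability measure on `[0,1]`. -/
noncomputable def unif : Measure ℝ := volume.restrict (Set.Icc 0 1)

/-- The product measure: i.i.d. Uniform[0,1] edge weights. -/
noncomputable def Pn (n : ℕ) : Measure (EdgeIdx n → ℝ) := Measure.pi fun _ => unif

/-- The weight of the pair `{i,j}` (defined to be `0` if `i = j`, a junk value never used). -/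
noncomputable def eV {n : ℕ} (ω : EdgeIdx n → ℝ) (i j : Fin n) : ℝ :=
  if h : i = j then 0 else ω ⟨s(i, j), by simp [Sym2.mk_isDiag_iff, h]⟩

/-- `σ` is a clique of `G(n,t)`: every pair of distinct elements of `σ` is an edge. -/
def IsClique {n : ℕ} (ω : EdgeIdx n → ℝ) (t : ℝ) (σ : Finset (Fin n)) : Prop :=
  ∀ i ∈ σ, ∀ j ∈ σ, i ≠ j → eV ω i j ≤ t

/-- `σ` is a maximal `(k+1)`-element clique of `G(n,t)`. -/
def IsMaxClique {n : ℕ} (k : ℕ) (ω : EdgeIdx n → ℝ) (t : ℝ) (σ : Finset (Fin n)) : Prop :=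
  σ.card = k + 1 ∧ IsClique ω t σ ∧ ∀ p, p ∉ σ → ∃ i ∈ σ, t < eV ω p i

/-- `N_k(t)`: the number of maximal `(k+1)`-element cliques of `G(n,t)`. -/
noncomputable def Nk {n : ℕ} (k : ℕ) (t : ℝ) (ω : EdgeIdx n → ℝ) : ℕ :=
  Nat.card {σ : Finset (Fin n) // IsMaxClique k ω t σ}

/-- `N*_k(t)`: the number of `(k+1)`-element subsets that are maximal cliques
of `G(n,s)` for some `s ∈ [t,1]`. -/
noncomputable def NkStar {n : ℕ} (k : ℕ) (t : ℝ) (ω : EdgeIdx n → ℝ) : ℕ :=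
  Nat.card {σ : Finset (Fin n) // ∃ s, t ≤ s ∧ s ≤ 1 ∧ IsMaxClique k ω s σ}

/-- The critical window time `t_c(k,n)`. -/
noncomputable def tc (k : ℕ) (c : ℝ) (n : ℕ) : ℝ :=
  ((((k : ℝ) / 2 + 1) * Real.log n + ((k : ℝ) / 2) * Real.log (Real.log n) + c) / n)
    ^ ((1 : ℝ) / (k + 1))

/-- `μ(k,c) = ((k/2+1)^(k/2)/(k+1)!) e^{-c}`. -/
noncomputable def muk (k : ℕ) (c : ℝ) : ℝ :=
  (((k : ℝ) / 2 + 1) ^ ((k : ℝ) / 2) / (Nat.factorial (k + 1))) * Real.exp (-c)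


open MeasureTheory Set Function Finset
open scoped ENNReal

instance : IsProbabilityMeasure unif :=
  ⟨by rw [unif, Measure.restrict_apply_univ, Real.volume_Icc]; norm_num⟩

lemma unif_Iic {a : ℝ} (h0 : 0 ≤ a) (h1 : a ≤ 1) : unif (Set.Iic a) = ENNReal.ofReal a := by
  rw [unif, Measure.restrict_apply measurableSet_Iic]
  have h : Set.Iic a ∩ Set.Icc 0 1 = Set.Icc 0 a := by
    ext x
    simp only [Set.mem_inter_iff, Set.mem_Iic, Set.mem_Icc]
    constructor
    · rintro ⟨hx, hx0, -⟩; exact ⟨hx0, hx⟩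
    · rintro ⟨hx0, hx⟩; exact ⟨hx, hx0, hx.trans h1⟩
  rw [h, Real.volume_Icc, sub_zero]

section Boxes

variable {ι : Type*} [Fintype ι]

lemma prod_indicator_box (c : ℝ) (z : ι → ℝ) :
    ∏ i : ι, (Set.Iic c).indicator (1 : ℝ → ℝ≥0∞) (z i)
      = (Set.univ.pi fun _ : ι => Set.Iic c).indicator (1 : (ι → ℝ) → ℝ≥0∞) z := by
  classical
  simp only [Set.indicator_apply, Pi.one_apply]
  rw [Fintype.prod_boole]
  simp [Set.mem_pi, Pi.le_def]

lemma lintegral_box (c : ℝ) :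
    ∫⁻ z : ι → ℝ, ∏ i : ι, (Set.Iic c).indicator (1 : ℝ → ℝ≥0∞) (z i)
        ∂(Measure.pi fun _ : ι => unif)
      = unif (Set.Iic c) ^ (Fintype.card ι) := by
  simp_rw [prod_indicator_box]
  rw [lintegral_indicator_one (MeasurableSet.univ_pi fun _ => measurableSet_Iic),
    Measure.pi_pi]
  rw [Finset.prod_const, Finset.card_univ]

lemma lintegral_inv_box (c : ℝ) :
    ∫⁻ z : ι → ℝ, (1 - ∏ i : ι, (Set.Iic c).indicator (1 : ℝ → ℝ≥0∞) (z i))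
        ∂(Measure.pi fun _ : ι => unif)
      = 1 - unif (Set.Iic c) ^ (Fintype.card ι) := by
  simp_rw [prod_indicator_box]
  have h : ∀ z : ι → ℝ, (1 : ℝ≥0∞) - (Set.univ.pi fun _ : ι => Set.Iic c).indicator 1 z
      = ((Set.univ.pi fun _ : ι => Set.Iic c)ᶜ).indicator (1 : (ι → ℝ) → ℝ≥0∞) z := by
    intro z
    by_cases hz : ∀ i, z i ≤ c <;>
      simp [hz, Set.indicator_apply, Set.mem_pi, Pi.le_def, Set.mem_Iic]
  simp_rw [h]
  rw [lintegral_indicator_one (MeasurableSet.univ_pi fun _ => measurableSet_Iic).compl,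
    prob_compl_eq_one_sub (MeasurableSet.univ_pi fun _ => measurableSet_Iic),
    Measure.pi_pi, Finset.prod_const, Finset.card_univ]

end Boxes

lemma final_integral (k n : ℕ) (hk : 1 ≤ k) (hn : k + 2 ≤ n) (t : ℝ) (ht0 : 0 ≤ t)
    (ht1 : t ≤ 1) :
    (∫⁻ a, (Set.Ioi t).indicator (1 : ℝ → ℝ≥0∞) a *
        (unif (Set.Iic a) ^ (Nat.choose (k+1) 2 - 1) *
         (1 - unif (Set.Iic a) ^ (k+1)) ^ (n - k - 1)) ∂unif).toReal
      = ∫ s in t..1, s ^ (Nat.choose (k + 1) 2 - 1) * (1 - s ^ (k + 1)) ^ (n - k - 1) := by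
  have hind : ∀ a : ℝ, (Set.Ioi t).indicator (1 : ℝ → ℝ≥0∞) a *
      (unif (Set.Iic a) ^ (Nat.choose (k+1) 2 - 1) *
         (1 - unif (Set.Iic a) ^ (k+1)) ^ (n - k - 1))
      = (Set.Ioi t).indicator (fun a => unif (Set.Iic a) ^ (Nat.choose (k+1) 2 - 1) *
         (1 - unif (Set.Iic a) ^ (k+1)) ^ (n - k - 1)) a := by
    intro a
    by_cases h : a ∈ Set.Ioi t <;> simp [h]
  simp_rw [hind]
  have hIoc : Set.Ioi t ∩ Set.Icc 0 1 = Set.Ioc t 1 := by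
    ext x
    simp only [Set.mem_inter_iff, Set.mem_Ioi, Set.mem_Icc, Set.mem_Ioc]
    constructor
    · rintro ⟨h1, -, h3⟩; exact ⟨h1, h3⟩
    · rintro ⟨h1, h2⟩; exact ⟨h1, ht0.trans h1.le, h2⟩
  have hres : unif.restrict (Set.Ioi t) = volume.restrict (Set.Ioc t 1) := by
    rw [show unif = volume.restrict (Set.Icc 0 1) from rfl,
      Measure.restrict_restrict measurableSet_Ioi, hIoc]
  rw [lintegral_indicator measurableSet_Ioi, hres]
  have hcong : ∫⁻ a in Set.Ioc t 1, (unif (Set.Iic a) ^ (Nat.choose (k+1) 2 - 1) *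
         (1 - unif (Set.Iic a) ^ (k+1)) ^ (n - k - 1)) ∂volume
      = ∫⁻ a in Set.Ioc t 1, ENNReal.ofReal
          (a ^ (Nat.choose (k + 1) 2 - 1) * (1 - a ^ (k + 1)) ^ (n - k - 1)) ∂volume := by
    refine setLIntegral_congr_fun measurableSet_Ioc (fun a ha => ?_)
    have ha0 : 0 ≤ a := ht0.trans ha.1.le
    have ha1 : a ≤ 1 := ha.2
    have hq0 : 0 ≤ a ^ (k+1) := pow_nonneg ha0 _
    have hq1 : a ^ (k+1) ≤ 1 := pow_le_one₀ ha0 ha1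
    rw [unif_Iic ha0 ha1]
    rw [← ENNReal.ofReal_pow ha0, ← ENNReal.ofReal_one, ← ENNReal.ofReal_pow ha0,
      ← ENNReal.ofReal_sub _ hq0, ← ENNReal.ofReal_pow (by linarith), ← ENNReal.ofReal_mul
      (pow_nonneg ha0 _)]
  rw [hcong]
  have hcont : Continuous (fun s : ℝ => s ^ (Nat.choose (k + 1) 2 - 1)
      * (1 - s ^ (k + 1)) ^ (n - k - 1)) :=
    (continuous_pow _).mul ((continuous_const.sub (continuous_pow _)).pow _)
  have hnn : 0 ≤ᵐ[volume.restrict (Set.Ioc t 1)] fun s : ℝ =>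
      s ^ (Nat.choose (k + 1) 2 - 1) * (1 - s ^ (k + 1)) ^ (n - k - 1) := by
    refine (ae_restrict_iff' measurableSet_Ioc).2 (ae_of_all _ fun x hx => ?_)
    have hx0 : 0 ≤ x := ht0.trans hx.1.le
    have hx1 : x ≤ 1 := hx.2
    have : x ^ (k+1) ≤ 1 := pow_le_one₀ hx0 hx1
    exact mul_nonneg (pow_nonneg hx0 _) (pow_nonneg (by linarith) _)
  rw [← ofReal_integral_eq_lintegral_ofReal (hcont.integrableOn_Ioc) hnn]
  rw [ENNReal.toReal_ofReal (integral_nonneg_of_ae hnn)]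
  rw [intervalIntegral.integral_of_le ht1]

noncomputable section Helpers

variable {δ : Type*} [DecidableEq δ] {π : δ → Type*} [∀ i, MeasurableSpace (π i)]
  {μ : ∀ i, Measure (π i)}

/-- `f` depends only on coordinates in `u`. -/
def DOn (f : (∀ i, π i) → ℝ≥0∞) (u : Set δ) : Prop :=
  ∀ x y : ∀ i, π i, (∀ i ∈ u, x i = y i) → f x = f y

lemma DOn.updateFinset_eq {f : (∀ i, π i) → ℝ≥0∞} {u : Set δ} (hf : DOn f u) {s : Finset δ}
    (hus : Disjoint u ↑s) (x : ∀ i, π i) (y : ∀ i : s, π i) :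
    f (updateFinset x s y) = f x := by
  refine hf _ _ fun i hi => ?_
  have his : i ∉ s := Set.disjoint_left.1 hus hi
  simp [updateFinset, his]

lemma DOn.lmarginal {f : (∀ i, π i) → ℝ≥0∞} {u : Set δ} (hf : DOn f u) (s : Finset δ) :
    DOn (∫⋯∫⁻_s, f ∂μ) u := by
  intro x y hxy
  refine lintegral_congr fun z => hf _ _ fun i hi => ?_
  by_cases h : i ∈ s <;> simp [updateFinset, h, hxy i hi]

lemma lmarginal_mul_right [∀ i, SigmaFinite (μ i)] {f g : (∀ i, π i) → ℝ≥0∞} {s : Finset δ}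
    (hf : Measurable f)
    (hg : ∀ (x : ∀ i, π i) (y : ∀ i : s, π i), g (updateFinset x s y) = g x) :
    ∫⋯∫⁻_s, (fun x => f x * g x) ∂μ = fun x => (∫⋯∫⁻_s, f ∂μ) x * g x := by
  funext x
  show ∫⁻ y, (f (updateFinset x s y) * g (updateFinset x s y)) ∂_ = _
  simp_rw [hg x]
  exact lintegral_mul_const'' _ ((hf.comp measurable_updateFinset).aemeasurable)

lemma lmarginal_of_indep [∀ i, IsProbabilityMeasure (μ i)] {g : (∀ i, π i) → ℝ≥0∞}
    {s : Finset δ}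
    (hg : ∀ (x : ∀ i, π i) (y : ∀ i : s, π i), g (updateFinset x s y) = g x) :
    ∫⋯∫⁻_s, g ∂μ = g := by
  funext x
  show ∫⁻ y, g (updateFinset x s y) ∂_ = _
  simp_rw [hg x]
  simp

lemma lmarginal_prod_blocks [∀ i, SigmaFinite (μ i)] {κ : Type*} [DecidableEq κ]
    (J : Finset κ) (B : κ → Finset δ) (g : κ → (∀ i, π i) → ℝ≥0∞) (K : Set δ)
    (hmeas : ∀ j, Measurable (g j))
    (hdep : ∀ j, DOn (g j) (↑(B j) ∪ K))
    (hK : ∀ j, Disjoint K (↑(B j) : Set δ))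
    (hpair : ∀ j j', j ≠ j' → Disjoint (B j) (B j')) :
    ∫⋯∫⁻_(J.biUnion B), (fun x => ∏ j ∈ J, g j x) ∂μ
      = fun x => ∏ j ∈ J, (∫⋯∫⁻_(B j), g j ∂μ) x := by
  classical
  induction J using Finset.induction_on with
  | empty => simp
  | @insert j₀ J hj₀ ih =>
    have hdisjF : Disjoint (B j₀) (J.biUnion B) := by
      rw [Finset.disjoint_biUnion_right]
      exact fun j hj => hpair _ _ (by rintro rfl; exact hj₀ hj)
    have hdisjS : ∀ j ∈ J, Disjoint (↑(B j₀) ∪ K) (↑(B j) : Set δ) := by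
      intro j hj
      refine Set.disjoint_union_left.2 ⟨?_, hK j⟩
      exact_mod_cast Finset.disjoint_coe.2 (hpair _ _ (by rintro rfl; exact hj₀ hj))
    have hdisjB : Disjoint (↑(B j₀) ∪ K) (↑(J.biUnion B) : Set δ) := by
      rw [Finset.coe_biUnion, Set.disjoint_iUnion_right]
      intro j
      rw [Set.disjoint_iUnion_right]
      exact fun hj => hdisjS j hj
    have h1 : (fun x => ∏ j ∈ insert j₀ J, g j x)
        = fun x => (∏ j ∈ J, g j x) * g j₀ x := by
      funext x; rw [Finset.prod_insert hj₀, mul_comm]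
    have hFmeas : Measurable fun x => ∏ j ∈ J, g j x :=
      Finset.measurable_prod _ fun j _ => hmeas j
    rw [Finset.biUnion_insert, lmarginal_union μ _ (by rw [h1]; exact hFmeas.mul (hmeas j₀)) hdisjF]
    rw [h1, lmarginal_mul_right hFmeas (fun x y => (hdep j₀).updateFinset_eq hdisjB x y), ih]
    have h2 : (fun x => (∏ j ∈ J, (∫⋯∫⁻_(B j), g j ∂μ) x) * g j₀ x)
        = fun x => g j₀ x * ∏ j ∈ J, (∫⋯∫⁻_(B j), g j ∂μ) x := by
      funext x; rw [mul_comm]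
    have hpull : ∀ j ∈ J, ∀ (x : ∀ i, π i) (y : ∀ i : (B j₀), π i),
        (∫⋯∫⁻_(B j), g j ∂μ) (updateFinset x (B j₀) y) = (∫⋯∫⁻_(B j), g j ∂μ) x := by
      intro j hj x y
      have hd1 : Disjoint (↑(B j) : Set δ) ↑(B j₀) := by
        exact_mod_cast Finset.disjoint_coe.2 (hpair _ _ (by rintro rfl; exact hj₀ hj)).symm
      have hd : Disjoint (↑(B j) ∪ K) (↑(B j₀) : Set δ) :=
        Set.disjoint_union_left.2 ⟨hd1, hK j₀⟩
      exact ((hdep j).lmarginal (B j)).updateFinset_eq hd x y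
    rw [h2, lmarginal_mul_right (hmeas j₀)
      (fun x y => Finset.prod_congr rfl fun j hj => hpull j hj x y)]
    funext x
    rw [Finset.prod_insert hj₀]

end Helpers

noncomputable section Setup

variable (k n : ℕ)

def E0 (hn : k + 2 ≤ n) : EdgeIdx n :=
  ⟨s(⟨0, by omega⟩, ⟨1, by omega⟩), by simp [Sym2.mk_isDiag_iff, Fin.ext_iff]⟩

/-- clique edges -/
def K0 (hn : k + 2 ≤ n) : Finset (EdgeIdx n) :=
  (univ : Finset {e : Sym2 (Fin (k+1)) // ¬ e.IsDiag}).image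
    (fun e => ⟨e.1.map (Fin.castLE (by omega)),
      fun h => e.2 ((Sym2.isDiag_map (Fin.castLE_injective _)).1 h)⟩)

lemma mem_K0 (hn : k + 2 ≤ n) (e : EdgeIdx n) :
    e ∈ K0 k n hn ↔ ∀ v ∈ e.1, (v : ℕ) ≤ k := by
  constructor
  · rw [K0, Finset.mem_image]
    rintro ⟨q, -, rfl⟩ v hv
    rw [Sym2.mem_map] at hv
    obtain ⟨w, -, rfl⟩ := hv
    simpa [Fin.coe_castLE] using Nat.lt_succ_iff.mp w.2
  · obtain ⟨e, he⟩ := e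
    induction e using Sym2.ind with
    | _ a b =>
      intro h
      have ha : (a : ℕ) ≤ k := h a (Sym2.mem_mk_left a b)
      have hb : (b : ℕ) ≤ k := h b (Sym2.mem_mk_right a b)
      have hab : a ≠ b := by rwa [Sym2.mk_isDiag_iff] at he
      rw [K0, Finset.mem_image]
      refine ⟨⟨s(⟨a, by omega⟩, ⟨b, by omega⟩), by
        simp only [Sym2.mk_isDiag_iff]
        exact fun hd => hab (Fin.val_injective (by simpa using hd))⟩, Finset.mem_univ _, ?_⟩
      apply Subtype.ext
      simp only [Sym2.map_pair_eq]
      congr 1 <;> exact Fin.val_injective rfl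

lemma E0_mem_K0 (hk : 1 ≤ k) (hn : k + 2 ≤ n) : E0 k n hn ∈ K0 k n hn := by
  rw [mem_K0]
  intro v hv
  rw [E0, Sym2.mem_iff] at hv
  rcases hv with rfl | rfl
  · simp
  · simpa using hk

lemma card_K0 (hn : k + 2 ≤ n) : (K0 k n hn).card = Nat.choose (k+1) 2 := by
  rw [K0, Finset.card_image_of_injective _ (fun e e' h => Subtype.ext
    (Sym2.map.injective (Fin.castLE_injective _) (congrArg Subtype.val h)))]
  rw [Finset.card_univ]
  have h := Sym2.card_subtype_not_diag (α := Fin (k+1))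
  rw [Fintype.card_fin] at h
  convert h using 2

def Kc (hn : k + 2 ≤ n) : Finset (EdgeIdx n) := (K0 k n hn).erase (E0 k n hn)

lemma card_Kc (hk : 1 ≤ k) (hn : k + 2 ≤ n) :
    (Kc k n hn).card = Nat.choose (k+1) 2 - 1 := by
  rw [Kc, Finset.card_erase_of_mem (E0_mem_K0 k n hk hn), card_K0]

/-- the inside vertices -/
def inV : Finset (Fin n) := univ.filter (fun l => (l : ℕ) ≤ k)

lemma card_inV (hn : k + 2 ≤ n) : (inV k n).card = k + 1 := by
  have : inV k n = (univ : Finset (Fin (k+1))).image (Fin.castLE (by omega)) := by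
    ext a
    simp only [inV, Finset.mem_filter, Finset.mem_univ, true_and, Finset.mem_image]
    constructor
    · intro ha; exact ⟨⟨a, by omega⟩, Fin.val_injective rfl⟩
    · rintro ⟨b, -, rfl⟩; simpa [Fin.coe_castLE] using Nat.lt_succ_iff.mp b.2
  rw [this, Finset.card_image_of_injective _ (Fin.castLE_injective _), Finset.card_univ,
    Fintype.card_fin]

/-- the block of edges from an outside vertex `p` to the inside -/
def Bp (hn : k + 2 ≤ n) (p : {p : Fin n // k + 1 ≤ (p : ℕ)}) : Finset (EdgeIdx n) :=
  (inV k n).attach.image (fun l => ⟨s(p.1, l.1), by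
    rw [Sym2.mk_isDiag_iff]
    intro h
    have hl : (l.1 : ℕ) ≤ k := (Finset.mem_filter.1 l.2).2
    have := p.2
    omega⟩)

lemma mem_Bp (hn : k + 2 ≤ n) (p : {p : Fin n // k + 1 ≤ (p : ℕ)}) (e : EdgeIdx n) :
    e ∈ Bp k n hn p ↔ ∃ l : Fin n, (l : ℕ) ≤ k ∧ e.1 = s(p.1, l) := by
  rw [Bp, Finset.mem_image]
  constructor
  · rintro ⟨l, -, rfl⟩
    exact ⟨l.1, (Finset.mem_filter.1 l.2).2, rfl⟩
  · rintro ⟨l, hl, he⟩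
    exact ⟨⟨l, Finset.mem_filter.2 ⟨Finset.mem_univ _, hl⟩⟩, Finset.mem_attach _ _,
      Subtype.ext he.symm⟩

lemma card_Bp (hn : k + 2 ≤ n) (p : {p : Fin n // k + 1 ≤ (p : ℕ)}) :
    (Bp k n hn p).card = k + 1 := by
  rw [Bp, Finset.card_image_of_injOn, Finset.card_attach, card_inV k n hn]
  intro l hl l' hl' h
  have h' : s(p.1, l.1) = s(p.1, l'.1) := congrArg Subtype.val h
  rw [Sym2.eq_iff] at h'
  rcases h' with ⟨-, h'⟩ | ⟨hp, h'⟩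
  · exact Subtype.ext h'
  · have hlk : ((l.1 : Fin n) : ℕ) ≤ k := (Finset.mem_filter.1 l.2).2
    have hv : ((l.1 : Fin n) : ℕ) = (p.1 : ℕ) := congrArg Fin.val h'
    have := p.2
    omega

lemma card_outside (hn : k + 2 ≤ n) :
    Fintype.card {p : Fin n // k + 1 ≤ (p : ℕ)} = n - (k + 1) := by
  classical
  rw [Fintype.card_subtype]
  have h := Finset.card_filter_add_card_filter_not
    (s := (univ : Finset (Fin n))) (p := fun p : Fin n => k + 1 ≤ (p : ℕ))
  have h2 : (univ.filter (fun p : Fin n => ¬ (k + 1 ≤ (p : ℕ)))).card = k + 1 := by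
    have : (univ.filter (fun p : Fin n => ¬ (k + 1 ≤ (p : ℕ)))) = inV k n := by
      ext a; simp [inV]
    rw [this, card_inV k n hn]
  rw [Finset.card_univ, Fintype.card_fin] at h
  omega

lemma E0_not_mem_Bp (hk : 1 ≤ k) (hn : k + 2 ≤ n) (p : {p : Fin n // k + 1 ≤ (p : ℕ)}) :
    E0 k n hn ∉ Bp k n hn p := by
  rw [mem_Bp]
  rintro ⟨l, hl, he⟩
  rw [E0] at he
  rw [Sym2.eq_iff] at he
  have := p.2
  rcases he with ⟨h1, -⟩ | ⟨-, h1⟩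
  · have h2 : (0 : ℕ) = (p.1 : ℕ) := congrArg Fin.val h1
    omega
  · have h2 : (1 : ℕ) = (p.1 : ℕ) := congrArg Fin.val h1
    omega

lemma disjoint_K0_Bp (hn : k + 2 ≤ n) (p : {p : Fin n // k + 1 ≤ (p : ℕ)}) :
    Disjoint (K0 k n hn) (Bp k n hn p) := by
  rw [Finset.disjoint_left]
  intro e heK heB
  rw [mem_K0] at heK
  rw [mem_Bp] at heB
  obtain ⟨l, hl, he⟩ := heB
  have hp : (p.1 : ℕ) ≤ k := heK p.1 (by rw [he]; exact Sym2.mem_mk_left _ _)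
  have := p.2
  omega

lemma disjoint_Bp_Bp (hn : k + 2 ≤ n) (p q : {p : Fin n // k + 1 ≤ (p : ℕ)}) (hpq : p ≠ q) :
    Disjoint (Bp k n hn p) (Bp k n hn q) := by
  rw [Finset.disjoint_left]
  intro e hep heq
  rw [mem_Bp] at hep heq
  obtain ⟨l, hl, hel⟩ := hep
  obtain ⟨m, hm, hem⟩ := heq
  rw [hel, Sym2.eq_iff] at hem
  have hp := p.2
  have hq := q.2
  rcases hem with ⟨h1, -⟩ | ⟨h1, h2⟩
  · exact hpq (Subtype.ext h1)
  · rw [h1] at hp; omega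

end Setup


section Lmarg
variable {n : ℕ}

lemma lmarg_box (S : Finset (EdgeIdx n)) (e₀ : EdgeIdx n) (he₀ : e₀ ∉ S)
    (x : EdgeIdx n → ℝ) :
    (∫⋯∫⁻_S, (fun ω => ∏ e ∈ S, (Set.Iic (ω e₀)).indicator (1 : ℝ → ℝ≥0∞) (ω e))
        ∂(fun _ => unif)) x
      = unif (Set.Iic (x e₀)) ^ S.card := by
  have key : ∀ z : (∀ _ : ↥S, ℝ),
      (∏ e ∈ S, (Set.Iic ((updateFinset x S z) e₀)).indicator (1:ℝ→ℝ≥0∞)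
        ((updateFinset x S z) e))
      = ∏ i : ↥S, (Set.Iic (x e₀)).indicator (1:ℝ→ℝ≥0∞) (z i) := by
    intro z
    have he : updateFinset x S z e₀ = x e₀ := by simp [updateFinset, he₀]
    rw [← Finset.prod_attach S (fun e => (Set.Iic (updateFinset x S z e₀)).indicator
        (1:ℝ→ℝ≥0∞) (updateFinset x S z e)), Finset.prod_coe_sort_eq_attach]
    refine Finset.prod_congr rfl fun i _ => ?_
    rw [he, show updateFinset x S z i.1 = z i from by simp [updateFinset, i.2]]
  show ∫⁻ z, _ ∂_ = _
  rw [lintegral_congr key]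
  exact (lintegral_box _).trans (by rw [Fintype.card_coe])

lemma lmarg_inv_box (S : Finset (EdgeIdx n)) (e₀ : EdgeIdx n) (he₀ : e₀ ∉ S)
    (x : EdgeIdx n → ℝ) :
    (∫⋯∫⁻_S, (fun ω => 1 - ∏ e ∈ S, (Set.Iic (ω e₀)).indicator (1 : ℝ → ℝ≥0∞) (ω e))
        ∂(fun _ => unif)) x
      = 1 - unif (Set.Iic (x e₀)) ^ S.card := by
  have key : ∀ z : (∀ _ : ↥S, ℝ),
      (1 - ∏ e ∈ S, (Set.Iic ((updateFinset x S z) e₀)).indicator (1:ℝ→ℝ≥0∞)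
        ((updateFinset x S z) e))
      = 1 - ∏ i : ↥S, (Set.Iic (x e₀)).indicator (1:ℝ→ℝ≥0∞) (z i) := by
    intro z
    have he : updateFinset x S z e₀ = x e₀ := by simp [updateFinset, he₀]
    rw [← Finset.prod_attach S (fun e => (Set.Iic (updateFinset x S z e₀)).indicator
        (1:ℝ→ℝ≥0∞) (updateFinset x S z e)), Finset.prod_coe_sort_eq_attach]
    congr 1
    refine Finset.prod_congr rfl fun i _ => ?_
    rw [he, show updateFinset x S z i.1 = z i from by simp [updateFinset, i.2]]
  show ∫⁻ z, _ ∂_ = _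
  rw [lintegral_congr key]
  exact (lintegral_inv_box _).trans (by rw [Fintype.card_coe])

end Lmarg

noncomputable section Main

variable (k n : ℕ) (t : ℝ)

/-- the event, expressed in terms of coordinates -/
def Sev (hn : k + 2 ≤ n) : Set (EdgeIdx n → ℝ) :=
  {ω | t < ω (E0 k n hn) ∧ (∀ e ∈ Kc k n hn, ω e ≤ ω (E0 k n hn)) ∧
       ∀ p : {p : Fin n // k + 1 ≤ (p : ℕ)}, ∃ e ∈ Bp k n hn p, ω (E0 k n hn) < ω e}

def FK (hn : k + 2 ≤ n) : (EdgeIdx n → ℝ) → ℝ≥0∞ :=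
  fun ω => ∏ e ∈ Kc k n hn, (Set.Iic (ω (E0 k n hn))).indicator 1 (ω e)

def FPp (hn : k + 2 ≤ n) (p : {p : Fin n // k + 1 ≤ (p : ℕ)}) : (EdgeIdx n → ℝ) → ℝ≥0∞ :=
  fun ω => 1 - ∏ e ∈ Bp k n hn p, (Set.Iic (ω (E0 k n hn))).indicator 1 (ω e)

def Ft (hn : k + 2 ≤ n) : (EdgeIdx n → ℝ) → ℝ≥0∞ :=
  fun ω => (Set.Ioi t).indicator 1 (ω (E0 k n hn)) *
    (FK k n hn ω * ∏ p : {p : Fin n // k + 1 ≤ (p : ℕ)}, FPp k n hn p ω)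

lemma meas_factor (e' e : EdgeIdx n) :
    Measurable (fun ω : EdgeIdx n → ℝ => (Set.Iic (ω e')).indicator (1 : ℝ → ℝ≥0∞) (ω e)) := by
  have h : (fun ω : EdgeIdx n → ℝ => (Set.Iic (ω e')).indicator (1 : ℝ → ℝ≥0∞) (ω e))
      = fun ω => if ω e ≤ ω e' then (1 : ℝ≥0∞) else 0 := by
    funext ω; simp [Set.indicator_apply, Set.mem_Iic]
  rw [h]
  exact Measurable.ite (measurableSet_le (measurable_pi_apply e) (measurable_pi_apply e'))
    measurable_const measurable_const

lemma meas_FK (hn : k + 2 ≤ n) : Measurable (FK k n hn) :=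
  Finset.measurable_prod _ fun e _ => meas_factor n _ e

lemma meas_FPp (hn : k + 2 ≤ n) (p : {p : Fin n // k + 1 ≤ (p : ℕ)}) :
    Measurable (FPp k n hn p) :=
  measurable_const.sub (Finset.measurable_prod _ fun e _ => meas_factor n _ e)

lemma meas_F0 (e' : EdgeIdx n) :
    Measurable (fun ω : EdgeIdx n → ℝ => (Set.Ioi t).indicator (1 : ℝ → ℝ≥0∞) (ω e')) := by
  have h : (fun ω : EdgeIdx n → ℝ => (Set.Ioi t).indicator (1 : ℝ → ℝ≥0∞) (ω e'))
      = fun ω => if t < ω e' then (1 : ℝ≥0∞) else 0 := by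
    funext ω; simp [Set.indicator_apply, Set.mem_Ioi]
  rw [h]
  exact Measurable.ite (measurableSet_lt measurable_const (measurable_pi_apply e'))
    measurable_const measurable_const

lemma meas_Ft (hn : k + 2 ≤ n) : Measurable (Ft k n t hn) :=
  (meas_F0 n t _).mul ((meas_FK k n hn).mul
    (Finset.measurable_prod _ fun p _ => meas_FPp k n hn p))

lemma DOn_FK (hn : k + 2 ≤ n) :
    DOn (FK k n hn) (↑(Kc k n hn) ∪ {E0 k n hn}) := by
  intro x y hxy
  have h0 : x (E0 k n hn) = y (E0 k n hn) := hxy _ (Or.inr rfl)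
  exact Finset.prod_congr rfl fun e he => by rw [h0, hxy e (Or.inl he)]

lemma DOn_FPp (hn : k + 2 ≤ n) (p : {p : Fin n // k + 1 ≤ (p : ℕ)}) :
    DOn (FPp k n hn p) (↑(Bp k n hn p) ∪ {E0 k n hn}) := by
  intro x y hxy
  have h0 : x (E0 k n hn) = y (E0 k n hn) := hxy _ (Or.inr rfl)
  have : (∏ e ∈ Bp k n hn p, (Set.Iic (x (E0 k n hn))).indicator (1 : ℝ → ℝ≥0∞) (x e))
      = ∏ e ∈ Bp k n hn p, (Set.Iic (y (E0 k n hn))).indicator (1 : ℝ → ℝ≥0∞) (y e) :=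
    Finset.prod_congr rfl fun e he => by rw [h0, hxy e (Or.inl he)]
  show 1 - _ = 1 - _
  rw [this]

lemma indicator_Sev (hk : 1 ≤ k) (hn : k + 2 ≤ n) (ω : EdgeIdx n → ℝ) :
    (Sev k n t hn).indicator (1 : (EdgeIdx n → ℝ) → ℝ≥0∞) ω = Ft k n t hn ω := by
  by_cases hω : ω ∈ Sev k n t hn
  · rw [Set.indicator_of_mem hω]
    obtain ⟨h1, h2, h3⟩ := hω
    have e1 : (Set.Ioi t).indicator (1 : ℝ → ℝ≥0∞) (ω (E0 k n hn)) = 1 :=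
      Set.indicator_of_mem (Set.mem_Ioi.2 h1) _
    have e2 : FK k n hn ω = 1 :=
      Finset.prod_eq_one fun e he => Set.indicator_of_mem (Set.mem_Iic.2 (h2 e he)) _
    have e3 : ∀ p, FPp k n hn p ω = 1 := by
      intro p
      obtain ⟨e, heB, hlt⟩ := h3 p
      have hz : (∏ e' ∈ Bp k n hn p,
          (Set.Iic (ω (E0 k n hn))).indicator (1 : ℝ → ℝ≥0∞) (ω e')) = 0 :=
        Finset.prod_eq_zero heB (Set.indicator_of_notMem (by simpa using not_le.2 hlt) _)
      show 1 - _ = 1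
      rw [hz, tsub_zero]
    rw [Ft, e1, e2, Finset.prod_eq_one fun p _ => e3 p, one_mul, one_mul]
    rfl
  · rw [Set.indicator_of_notMem hω]
    rw [Sev, Set.mem_setOf_eq, not_and_or, not_and_or] at hω
    rcases hω with h1 | h2 | h3
    · have : (Set.Ioi t).indicator (1 : ℝ → ℝ≥0∞) (ω (E0 k n hn)) = 0 :=
        Set.indicator_of_notMem (by simpa using h1) _
      rw [Ft, this, zero_mul]
    · push_neg at h2
      obtain ⟨e, he, hgt⟩ := h2
      have : FK k n hn ω = 0 :=
        Finset.prod_eq_zero he (Set.indicator_of_notMem (by simpa using hgt) _)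
      rw [Ft, this, zero_mul, mul_zero]
    · push_neg at h3
      obtain ⟨p, hp⟩ := h3
      have : FPp k n hn p ω = 0 := by
        show 1 - _ = 0
        rw [Finset.prod_eq_one fun e he => Set.indicator_of_mem (Set.mem_Iic.2 (hp e he)) _, tsub_self]
      rw [Ft, Finset.prod_eq_zero (Finset.mem_univ p) this, mul_zero, mul_zero]

lemma meas_Sev (hn : k + 2 ≤ n) : MeasurableSet (Sev k n t hn) := by
  have hrw : Sev k n t hn = {ω : EdgeIdx n → ℝ | t < ω (E0 k n hn)} ∩
      ((⋂ e ∈ Kc k n hn, {ω : EdgeIdx n → ℝ | ω e ≤ ω (E0 k n hn)}) ∩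
       (⋂ p : {p : Fin n // k + 1 ≤ (p : ℕ)},
          ⋃ e ∈ Bp k n hn p, {ω : EdgeIdx n → ℝ | ω (E0 k n hn) < ω e})) := by
    ext ω
    simp only [Sev, Set.mem_setOf_eq, Set.mem_inter_iff, Set.mem_iInter, Set.mem_iUnion,
      exists_prop]
  rw [hrw]
  refine (measurableSet_lt measurable_const (measurable_pi_apply _)).inter (MeasurableSet.inter ?_ ?_)
  · exact MeasurableSet.biInter (Finset.countable_toSet _) fun e _ =>
      measurableSet_le (measurable_pi_apply _) (measurable_pi_apply _)
  · exact MeasurableSet.iInter fun p => MeasurableSet.biUnion (Finset.countable_toSet _)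
      fun e _ => measurableSet_lt (measurable_pi_apply _) (measurable_pi_apply _)

lemma measure_Sev (hk : 1 ≤ k) (hn : k + 2 ≤ n) :
    Pn n (Sev k n t hn) = ∫⁻ a, (Set.Ioi t).indicator (1 : ℝ → ℝ≥0∞) a *
      (unif (Set.Iic a) ^ (Nat.choose (k+1) 2 - 1) *
       (1 - unif (Set.Iic a) ^ (k+1)) ^ (n - k - 1)) ∂unif := by
  classical
  have h1 : Pn n (Sev k n t hn)
      = ∫⁻ ω, Ft k n t hn ω ∂(Measure.pi fun _ : EdgeIdx n => unif) := by
    rw [show Pn n = Measure.pi fun _ : EdgeIdx n => unif from rfl,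
      ← lintegral_indicator_one (meas_Sev k n t hn)]
    exact lintegral_congr (indicator_Sev k n t hk hn)
  rw [h1, lintegral_eq_lmarginal_univ (fun _ => (0:ℝ))]
  set W : Finset (EdgeIdx n) :=
    Kc k n hn ∪ (univ : Finset {p : Fin n // k + 1 ≤ (p:ℕ)}).biUnion (Bp k n hn) with hW
  have hKcsub : Kc k n hn ⊆ K0 k n hn := Finset.erase_subset _ _
  have hKcBp : ∀ p, Disjoint (Kc k n hn) (Bp k n hn p) :=
    fun p => (disjoint_K0_Bp k n hn p).mono_left hKcsub
  have he₀Kc : E0 k n hn ∉ Kc k n hn := Finset.notMem_erase _ _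
  have he₀W : E0 k n hn ∉ W := by
    rw [hW, Finset.mem_union, Finset.mem_biUnion]
    push_neg
    exact ⟨he₀Kc, fun p _ => E0_not_mem_Bp k n hk hn p⟩
  have hsplit : insert (E0 k n hn) W ∪ ((univ : Finset (EdgeIdx n)) \ insert (E0 k n hn) W)
      = (univ : Finset (EdgeIdx n)) := by
    exact Finset.union_sdiff_of_subset (Finset.subset_univ _)
  have hdisjR : Disjoint (insert (E0 k n hn) W) (univ \ insert (E0 k n hn) W) :=
    Finset.disjoint_sdiff
  -- membership helpers
  have hmem0 : (E0 k n hn) ∈ (↑(insert (E0 k n hn) W) : Set (EdgeIdx n)) :=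
    Finset.mem_coe.2 (Finset.mem_insert_self _ _)
  have hmemK : ∀ e ∈ Kc k n hn, e ∈ (↑(insert (E0 k n hn) W) : Set (EdgeIdx n)) :=
    fun e he => Finset.mem_coe.2 (Finset.mem_insert_of_mem (Finset.mem_union_left _ he))
  have hmemB : ∀ (p) (e), e ∈ Bp k n hn p →
      e ∈ (↑(insert (E0 k n hn) W) : Set (EdgeIdx n)) :=
    fun p e he => Finset.mem_coe.2 (Finset.mem_insert_of_mem (Finset.mem_union_right _
      (Finset.mem_biUnion.2 ⟨p, Finset.mem_univ _, he⟩)))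
  have hDFt : DOn (Ft k n t hn) ↑(insert (E0 k n hn) W) := by
    intro x y hxy
    have h0 : x (E0 k n hn) = y (E0 k n hn) := hxy _ hmem0
    show (Set.Ioi t).indicator 1 (x (E0 k n hn)) * (FK k n hn x * ∏ p, FPp k n hn p x)
      = (Set.Ioi t).indicator 1 (y (E0 k n hn)) * (FK k n hn y * ∏ p, FPp k n hn p y)
    rw [h0, DOn_FK k n hn x y (fun e he => by
      rcases he with he | he
      · exact hxy e (hmemK e he)
      · exact hxy e (he ▸ hmem0)),
      Finset.prod_congr rfl fun p _ => DOn_FPp k n hn p x y (fun e he => by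
        rcases he with he | he
        · exact hxy e (hmemB p e he)
        · exact hxy e (he ▸ hmem0))]
  rw [← hsplit, lmarginal_union _ _ (meas_Ft k n t hn) hdisjR]
  have hinner : (∫⋯∫⁻_(univ \ insert (E0 k n hn) W), Ft k n t hn ∂(fun _ => unif))
      = Ft k n t hn :=
    lmarginal_of_indep (fun x y => hDFt.updateFinset_eq
      (Finset.disjoint_coe.2 hdisjR) x y)
  rw [hinner, lmarginal_insert _ (meas_Ft k n t hn) he₀W]
  -- evaluate the W-marginal
  have hGmeas : Measurable (fun ω : EdgeIdx n → ℝ =>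
      FK k n hn ω * ∏ p, FPp k n hn p ω) :=
    (meas_FK k n hn).mul (Finset.measurable_prod _ fun p _ => meas_FPp k n hn p)
  have hdisjKB : Disjoint (Kc k n hn)
      ((univ : Finset {p : Fin n // k + 1 ≤ (p:ℕ)}).biUnion (Bp k n hn)) := by
    rw [Finset.disjoint_biUnion_right]; exact fun p _ => hKcBp p
  have hsing : ∀ p, Disjoint ({E0 k n hn} : Set (EdgeIdx n)) ↑(Bp k n hn p) :=
    fun p => Set.disjoint_singleton_left.2
      (fun h => E0_not_mem_Bp k n hk hn p (Finset.mem_coe.1 h))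
  have hdisj1 : Disjoint ((↑(Kc k n hn) : Set (EdgeIdx n)) ∪ {E0 k n hn})
      ↑((univ : Finset {p : Fin n // k + 1 ≤ (p:ℕ)}).biUnion (Bp k n hn)) := by
    refine Set.disjoint_union_left.2 ⟨?_, ?_⟩
    · exact_mod_cast Finset.disjoint_coe.2 hdisjKB
    · refine Set.disjoint_singleton_left.2 (fun h => ?_)
      rw [Finset.mem_coe, Finset.mem_biUnion] at h
      obtain ⟨p, -, hp⟩ := h
      exact E0_not_mem_Bp k n hk hn p hp
  have hWeval : (∫⋯∫⁻_W, Ft k n t hn ∂(fun _ => unif)) = fun x =>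
      (Set.Ioi t).indicator 1 (x (E0 k n hn)) *
        (unif (Set.Iic (x (E0 k n hn))) ^ (Kc k n hn).card *
         ∏ _p : {p : Fin n // k + 1 ≤ (p:ℕ)},
           (1 - unif (Set.Iic (x (E0 k n hn))) ^ (k+1))) := by
    have hstep1 : Ft k n t hn = fun ω => (FK k n hn ω * ∏ p, FPp k n hn p ω) *
        ((Set.Ioi t).indicator 1 (ω (E0 k n hn))) := by
      funext ω; rw [Ft, mul_comm]
    rw [hstep1]
    rw [lmarginal_mul_right hGmeas (fun x y => by
      show (Set.Ioi t).indicator 1 (updateFinset x W y (E0 k n hn)) = _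
      rw [show updateFinset x W y (E0 k n hn) = x (E0 k n hn) from by
        simp [updateFinset, he₀W]])]
    rw [hW, lmarginal_union _ _ hGmeas hdisjKB]
    have hstep2 : (fun ω : EdgeIdx n → ℝ => FK k n hn ω * ∏ p, FPp k n hn p ω)
        = fun ω => (∏ p, FPp k n hn p ω) * FK k n hn ω := funext fun ω => mul_comm _ _
    rw [hstep2, lmarginal_mul_right
      (Finset.measurable_prod _ fun p _ => meas_FPp k n hn p)
      (fun x y => (DOn_FK k n hn).updateFinset_eq hdisj1 x y)]
    rw [lmarginal_prod_blocks (univ) (Bp k n hn) (FPp k n hn) {E0 k n hn}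
      (fun p => meas_FPp k n hn p) (fun p => DOn_FPp k n hn p) hsing
      (fun p q hpq => disjoint_Bp_Bp k n hn p q hpq)]
    have hFPeval : ∀ p, (∫⋯∫⁻_(Bp k n hn p), FPp k n hn p ∂(fun _ => unif))
        = fun x : EdgeIdx n → ℝ => 1 - unif (Set.Iic (x (E0 k n hn))) ^ (k+1) := by
      intro p; funext x
      rw [show (∫⋯∫⁻_(Bp k n hn p), FPp k n hn p ∂(fun _ => unif)) x
          = 1 - unif (Set.Iic (x (E0 k n hn))) ^ (Bp k n hn p).card from
        lmarg_inv_box _ _ (E0_not_mem_Bp k n hk hn p) x, card_Bp k n hn p]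
    simp only [hFPeval]
    rw [show (fun x : EdgeIdx n → ℝ =>
        (∏ _p : {p : Fin n // k + 1 ≤ (p:ℕ)},
          (1 - unif (Set.Iic (x (E0 k n hn))) ^ (k+1))) * FK k n hn x)
      = fun x => FK k n hn x * ∏ _p : {p : Fin n // k + 1 ≤ (p:ℕ)},
          (1 - unif (Set.Iic (x (E0 k n hn))) ^ (k+1)) from funext fun x => mul_comm _ _]
    rw [lmarginal_mul_right (meas_FK k n hn) (fun x y => by
      show (∏ _p : {p : Fin n // k + 1 ≤ (p:ℕ)},
          (1 - unif (Set.Iic ((updateFinset x (Kc k n hn) y) (E0 k n hn))) ^ (k+1))) = _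
      rw [show updateFinset x (Kc k n hn) y (E0 k n hn) = x (E0 k n hn) from by
        simp [updateFinset, he₀Kc]])]
    funext x
    beta_reduce
    rw [show (∫⋯∫⁻_(Kc k n hn), FK k n hn ∂(fun _ => unif)) x
        = unif (Set.Iic (x (E0 k n hn))) ^ (Kc k n hn).card from
      lmarg_box _ _ he₀Kc x]
    ring
  rw [hWeval]
  refine lintegral_congr fun a => ?_
  simp only [Function.update_self]
  rw [Finset.prod_const, Finset.card_univ, card_outside k n hn, card_Kc k n hk hn]
  rw [show n - (k + 1) = n - k - 1 from by omega]

end Main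

section Final

lemma edge_repr {n : ℕ} (e : EdgeIdx n) : ∃ a b : Fin n, a < b ∧ e.1 = s(a, b) := by
  obtain ⟨e, he⟩ := e
  induction e using Sym2.ind with
  | _ x y =>
    rw [Sym2.mk_isDiag_iff] at he
    rcases lt_or_gt_of_ne he with h | h
    · exact ⟨x, y, h, rfl⟩
    · exact ⟨y, x, h, Sym2.eq_swap⟩

lemma eV_edge {n : ℕ} (ω : EdgeIdx n → ℝ) (a b : Fin n) (hab : a ≠ b) (e : EdgeIdx n)
    (he : e.1 = s(a, b)) : eV ω a b = ω e := by
  rw [eV, dif_neg hab]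
  exact congrArg ω (Subtype.ext he.symm)


/-- With vertices `0,…,n−1` of `Fin n` playing the role of `1,…,n`,
the event `A = {U({1,2}) > t} ∩ {U({l,m}) ≤ U({1,2}) ∀ 1 ≤ l < m ≤ k+1}
∩ ⋂_{p=k+2}^n {U({p,l}) > U({1,2}) for some 1 ≤ l ≤ k+1}` has probability
`∫_t^1 s^(C(k+1,2)−1) (1−s^{k+1})^{n−k−1} ds`. -/
theorem prob_become_maximal_eq_integral (k n : ℕ) (hk : 1 ≤ k) (hn : k + 2 ≤ n)
    (t : ℝ) (ht : t ∈ Set.Icc (0 : ℝ) 1) :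
    (Pn n {ω : EdgeIdx n → ℝ |
        t < eV ω ⟨0, by omega⟩ ⟨1, by omega⟩ ∧
        (∀ l m : Fin n, l < m → (m : ℕ) ≤ k → eV ω l m ≤ eV ω ⟨0, by omega⟩ ⟨1, by omega⟩) ∧
        (∀ p : Fin n, k + 1 ≤ (p : ℕ) →
          ∃ l : Fin n, (l : ℕ) ≤ k ∧ eV ω ⟨0, by omega⟩ ⟨1, by omega⟩ < eV ω p l)}).toReal
      = ∫ s in t..1, s ^ (Nat.choose (k + 1) 2 - 1) * (1 - s ^ (k + 1)) ^ (n - k - 1) := by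
  obtain ⟨ht0, ht1⟩ := ht
  have hv01 : (⟨0, by omega⟩ : Fin n) ≠ ⟨1, by omega⟩ := by
    intro h
    exact absurd (congrArg Fin.val h) (by norm_num)
  have heV : ∀ ω : EdgeIdx n → ℝ, eV ω ⟨0, by omega⟩ ⟨1, by omega⟩ = ω (E0 k n hn) :=
    fun ω => eV_edge ω _ _ hv01 (E0 k n hn) rfl
  have hSet : {ω : EdgeIdx n → ℝ |
        t < eV ω ⟨0, by omega⟩ ⟨1, by omega⟩ ∧
        (∀ l m : Fin n, l < m → (m : ℕ) ≤ k → eV ω l m ≤ eV ω ⟨0, by omega⟩ ⟨1, by omega⟩) ∧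
        (∀ p : Fin n, k + 1 ≤ (p : ℕ) →
          ∃ l : Fin n, (l : ℕ) ≤ k ∧ eV ω ⟨0, by omega⟩ ⟨1, by omega⟩ < eV ω p l)}
      = Sev k n t hn := by
    ext ω
    simp only [Set.mem_setOf_eq, Sev]
    rw [heV ω]
    constructor
    · rintro ⟨h1, h2, h3⟩
      refine ⟨h1, ?_, ?_⟩
      · intro e he
        obtain ⟨a, b, hab, hrep⟩ := edge_repr e
        have heK : ∀ v ∈ e.1, (v : ℕ) ≤ k :=
          (mem_K0 k n hn e).1 (Finset.erase_subset _ _ he)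
        have hb : (b : ℕ) ≤ k := heK b (by rw [hrep]; exact Sym2.mem_mk_right a b)
        rw [← eV_edge ω a b hab.ne e hrep]
        rw [← heV ω]
        exact h2 a b hab hb
      · intro p
        obtain ⟨l, hl, hlt⟩ := h3 p.1 p.2
        have hpl : p.1 ≠ l := by
          intro h
          have := congrArg Fin.val h
          have := p.2
          omega
        refine ⟨⟨s(p.1, l), by rwa [Sym2.mk_isDiag_iff]⟩,
          (mem_Bp k n hn p _).2 ⟨l, hl, rfl⟩, ?_⟩
        rw [← eV_edge ω p.1 l hpl ⟨s(p.1, l), by rwa [Sym2.mk_isDiag_iff]⟩ rfl]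
        exact hlt
    · rintro ⟨h1, h2, h3⟩
      refine ⟨h1, ?_, ?_⟩
      · intro l m hlm hmk
        have hne : l ≠ m := hlm.ne
        have hlk : (l : ℕ) ≤ k := by
          have := (Fin.lt_def.1 hlm)
          omega
        rw [eV_edge ω l m hne ⟨s(l, m), by rwa [Sym2.mk_isDiag_iff]⟩ rfl]
        by_cases hE : (⟨s(l, m), by rwa [Sym2.mk_isDiag_iff]⟩ : EdgeIdx n) = E0 k n hn
        · rw [hE]
        · refine h2 _ (Finset.mem_erase.2 ⟨hE, (mem_K0 k n hn _).2 ?_⟩)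
          intro v hv
          rw [Sym2.mem_iff] at hv
          rcases hv with rfl | rfl
          · exact hlk
          · exact hmk
      · intro p hp
        obtain ⟨e, heB, hlt⟩ := h3 ⟨p, hp⟩
        obtain ⟨l, hl, hrep⟩ := (mem_Bp k n hn ⟨p, hp⟩ e).1 heB
        have hpl : p ≠ l := by
          intro h
          have := congrArg Fin.val h
          omega
        refine ⟨l, hl, ?_⟩
        rw [eV_edge ω p l hpl e hrep]
        exact hlt
  rw [hSet, measure_Sev k n t hk hn]
  exact final_integral k n hk hn t ht0 ht1
end Final
end

section
/- Let k ≥ 1 be an integer and c ∈ ℝ, and for n ≥ 3 let t_c(k,n) := (((k/2+1)·log n + (k/2)·log log n + c)/n)^{1/(k+1)}. Then lim_{n→∞} n^{k+1} ∫_{t_c(k,n)}^{1} s^{k(k+1)/2 − 1} e^{−n s^{k+1}} ds = 0. -/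
open Filter Real

lemma aux_exp_integral (t lam : ℝ) (ht1 : t ≤ 1) (hl : 0 < lam) :
    ∫ s in t..1, Real.exp (-lam * (s - t)) ≤ 1 / lam := by
  have hd : ∀ s ∈ Set.uIcc t 1,
      HasDerivAt (fun s => -(1 / lam) * Real.exp (-lam * (s - t)))
        (Real.exp (-lam * (s - t))) s := by
    intro s _
    have hu : HasDerivAt (fun s => -lam * (s - t)) (-lam) s := by
      simpa using ((hasDerivAt_id s).sub_const t).const_mul (-lam)
    have := (hu.exp).const_mul (-(1 / lam))
    have e : -(1 / lam) * (Real.exp (-lam * (s - t)) * -lam) = Real.exp (-lam * (s - t)) := by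
      field_simp
    rw [e] at this
    exact this
  have hcont : Continuous fun s => Real.exp (-lam * (s - t)) := by fun_prop
  rw [intervalIntegral.integral_eq_sub_of_hasDerivAt hd (hcont.intervalIntegrable _ _)]
  have h1 : 0 < Real.exp (-lam * (1 - t)) := Real.exp_pos _
  have h2 : -lam * (t - t) = 0 := by ring
  rw [h2, Real.exp_zero]
  have hl' : 0 < 1 / lam := by positivity
  nlinarith

lemma aux_calc (k m n : ℕ) (c L A t : ℝ) (hn0 : 0 < (n : ℝ)) (hL : L = Real.log n)
    (hL0 : 0 < L) (hA0 : 0 < A)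
    (hm2 : ((m : ℝ) + 1) * ((1 : ℝ) / ((k : ℝ) + 1)) = (k : ℝ) / 2)
    (hA : A = ((k : ℝ) / 2 + 1) * L + ((k : ℝ) / 2) * Real.log L + c)
    (ht : t = (A / (n : ℝ)) ^ ((1 : ℝ) / ((k : ℝ) + 1))) :
    (n : ℝ) ^ (k + 1) * (t ^ m * Real.exp (-A) * (t / A))
      = Real.exp (-c) * A ^ ((k : ℝ) / 2 - 1) * L ^ (-(k : ℝ) / 2) := by
  have hAn : 0 < A / n := div_pos hA0 hn0
  have ht' : t = Real.exp ((Real.log A - L) * ((1 : ℝ) / ((k : ℝ) + 1))) := by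
    rw [ht, Real.rpow_def_of_pos hAn, Real.log_div hA0.ne' hn0.ne', hL]
  have htm : t ^ m
      = Real.exp ((m : ℝ) * ((Real.log A - L) * ((1 : ℝ) / ((k : ℝ) + 1)))) := by
    rw [ht', Real.exp_nat_mul]
  have htA : t / A
      = Real.exp ((Real.log A - L) * ((1 : ℝ) / ((k : ℝ) + 1))) * Real.exp (-Real.log A) := by
    rw [← ht', Real.exp_neg, Real.exp_log hA0, div_eq_mul_inv]
  have hnk : (n : ℝ) ^ (k + 1) = Real.exp (((k : ℝ) + 1) * L) := by
    rw [hL, ← Real.exp_log hn0, ← Real.exp_nat_mul, Real.log_exp]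
    push_cast; ring_nf
  rw [hnk, htm, htA, Real.rpow_def_of_pos hA0, Real.rpow_def_of_pos hL0]
  simp only [← Real.exp_add]
  rw [Real.exp_eq_exp]
  linear_combination (Real.log A - L) * hm2 - hA

lemma aux_pointwise (k m : ℕ) (hk : 1 ≤ k) (n : ℕ) (A t : ℝ)
    (ht0 : 0 < t) (hA0 : 0 < A) (hmA : (m : ℝ) ≤ A)
    (hnT : (n : ℝ) * t ^ (k + 1) = A) :
    ∀ s ∈ Set.Icc t 1,
      s ^ m * Real.exp (-(n : ℝ) * s ^ (k + 1))
        ≤ t ^ m * Real.exp (-A) * Real.exp (-(A / t) * (s - t)) := by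
  rintro s ⟨hts, hs1⟩
  have hs0 : 0 < s := lt_of_lt_of_le ht0 hts
  have hst : 0 ≤ s - t := by linarith
  have htne : t ≠ 0 := ne_of_gt ht0
  -- s ≤ t * exp((s-t)/t)
  have h1 : s ≤ t * Real.exp ((s - t) / t) := by
    have h := Real.add_one_le_exp ((s - t) / t)
    have h2 : (s - t) / t + 1 = s / t := by field_simp; ring
    rw [h2] at h
    calc s = t * (s / t) := by field_simp
      _ ≤ t * Real.exp ((s - t) / t) := by
          exact mul_le_mul_of_nonneg_left h ht0.le
  have hsm : s ^ m ≤ t ^ m * Real.exp ((m : ℝ) * ((s - t) / t)) := by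
    calc s ^ m ≤ (t * Real.exp ((s - t) / t)) ^ m := pow_le_pow_left₀ hs0.le h1 m
      _ = t ^ m * Real.exp ((s - t) / t) ^ m := mul_pow _ _ _
      _ = t ^ m * Real.exp ((m : ℝ) * ((s - t) / t)) := by rw [← Real.exp_nat_mul]
  have hexp : A + ((k : ℝ) + 1) * (A / t) * (s - t) ≤ (n : ℝ) * s ^ (k + 1) := by
    have hge : (-2 : ℝ) ≤ (s - t) / t :=
      le_trans (by norm_num) (div_nonneg hst ht0.le)
    have hb := one_add_mul_le_pow hge (k + 1)
    have h2 : 1 + (s - t) / t = s / t := by field_simp; ring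
    rw [h2] at hb
    have h3 : t ^ (k + 1) * (1 + ((k : ℝ) + 1) * ((s - t) / t)) ≤ s ^ (k + 1) := by
      calc t ^ (k + 1) * (1 + ((k : ℝ) + 1) * ((s - t) / t))
          ≤ t ^ (k + 1) * (s / t) ^ (k + 1) := by
            apply mul_le_mul_of_nonneg_left _ (pow_nonneg ht0.le _)
            convert hb using 3
            push_cast; ring
        _ = s ^ (k + 1) := by rw [div_pow]; field_simp
    have h4 : (n : ℝ) * (t ^ (k + 1) * (1 + ((k : ℝ) + 1) * ((s - t) / t)))
        ≤ (n : ℝ) * s ^ (k + 1) := mul_le_mul_of_nonneg_left h3 (Nat.cast_nonneg n)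
    have h5 : (n : ℝ) * (t ^ (k + 1) * (1 + ((k : ℝ) + 1) * ((s - t) / t)))
        = A + ((k : ℝ) + 1) * (A / t) * (s - t) := by
      rw [← mul_assoc, hnT]; field_simp
    linarith
  calc s ^ m * Real.exp (-(n : ℝ) * s ^ (k + 1))
      ≤ (t ^ m * Real.exp ((m : ℝ) * ((s - t) / t)))
          * Real.exp (-(A + ((k : ℝ) + 1) * (A / t) * (s - t))) := by
        apply mul_le_mul hsm (Real.exp_le_exp.2 (by linarith)) (Real.exp_pos _).le
        positivity
    _ = t ^ m * Real.exp ((m : ℝ) * ((s - t) / t)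
          + -(A + ((k : ℝ) + 1) * (A / t) * (s - t))) := by
        rw [mul_assoc, ← Real.exp_add]
    _ ≤ t ^ m * Real.exp (-A + -(A / t) * (s - t)) := by
        apply mul_le_mul_of_nonneg_left (Real.exp_le_exp.2 _) (pow_nonneg ht0.le m)
        have h6 : (m : ℝ) * ((s - t) / t) ≤ A * ((s - t) / t) :=
          mul_le_mul_of_nonneg_right hmA (by positivity)
        have h7 : A * ((s - t) / t) ≤ (k : ℝ) * (A / t) * (s - t) := by
          have hk1 : (1 : ℝ) ≤ (k : ℝ) := by exact_mod_cast hk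
          calc A * ((s - t) / t) ≤ (k : ℝ) * (A * ((s - t) / t)) :=
                le_mul_of_one_le_left (by positivity) hk1
            _ = (k : ℝ) * (A / t) * (s - t) := by ring
        have h8 : A / t * (s - t) = A * ((s - t) / t) := by field_simp
        nlinarith [h8]
    _ = t ^ m * Real.exp (-A) * Real.exp (-(A / t) * (s - t)) := by
        rw [Real.exp_add, ← mul_assoc]

set_option maxHeartbeats 1000000 in
/-- For `k ≥ 1` and `c ∈ ℝ`,
`n^{k+1} ∫_{t_c(k,n)}^1 s^{k(k+1)/2 − 1} e^{−n s^{k+1}} ds → 0` as `n → ∞`. -/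
theorem n_pow_mul_integral_tendsto_zero (k : ℕ) (hk : 1 ≤ k) (c : ℝ) :
    Filter.Tendsto
      (fun n : ℕ =>
        (n : ℝ) ^ (k + 1) *
          ∫ s in (tc k c n)..1,
            s ^ (k * (k + 1) / 2 - 1) * Real.exp (-(n : ℝ) * s ^ (k + 1)))
      Filter.atTop (nhds 0) := by
  have hkR : (1 : ℝ) ≤ (k : ℝ) := by exact_mod_cast hk
  have hkne : ((k : ℝ) + 1) ≠ 0 := by positivity
  set m : ℕ := k * (k + 1) / 2 - 1 with hmdef
  obtain ⟨q, hq⟩ := (Nat.even_mul_succ_self k).two_dvd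
  have hq1 : 1 ≤ q := by nlinarith
  have hm1 : m = q - 1 := by
    rw [hmdef, hq, Nat.mul_div_cancel_left q (by norm_num)]
  have hmq : m + 1 = q := by omega
  have hmcast : (m : ℝ) + 1 = (k : ℝ) * ((k : ℝ) + 1) / 2 := by
    have h1 : ((m : ℝ) + 1) = (q : ℝ) := by exact_mod_cast hmq
    have h2 := congrArg (Nat.cast : ℕ → ℝ) hq
    push_cast at h2
    linarith
  have hm2 : ((m : ℝ) + 1) * ((1 : ℝ) / ((k : ℝ) + 1)) = (k : ℝ) / 2 := by
    rw [hmcast]; field_simp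
  have hlog : Filter.Tendsto (fun n : ℕ => Real.log n) Filter.atTop Filter.atTop :=
    Real.tendsto_log_atTop.comp tendsto_natCast_atTop_atTop
  have hbound : Filter.Tendsto
      (fun n : ℕ => Real.exp (-c) * ((k : ℝ) + 2) ^ k / Real.log n)
      Filter.atTop (nhds 0) := Filter.Tendsto.div_atTop tendsto_const_nhds hlog
  have hev1 : ∀ᶠ n : ℕ in Filter.atTop, 2 * |c| + (m : ℝ) + 2 ≤ Real.log n :=
    hlog.eventually_ge_atTop _
  have hev2 : ∀ᶠ n : ℕ in Filter.atTop, ((k : ℝ) + 2) * Real.log n ≤ (n : ℝ) := by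
    have h := Real.isLittleO_log_id_atTop.def (c := 1 / ((k : ℝ) + 2)) (by positivity)
    filter_upwards [tendsto_natCast_atTop_atTop.eventually h, hlog.eventually_ge_atTop 0]
      with n hn hln
    simp only [id_eq, Real.norm_eq_abs] at hn
    rw [abs_of_nonneg hln, abs_of_nonneg (Nat.cast_nonneg n)] at hn
    have hk2 : (0 : ℝ) < (k : ℝ) + 2 := by positivity
    calc ((k : ℝ) + 2) * Real.log n ≤ ((k : ℝ) + 2) * (1 / ((k : ℝ) + 2) * n) :=
          mul_le_mul_of_nonneg_left hn hk2.le
      _ = n := by field_simp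
  have hmain : ∀ᶠ n : ℕ in Filter.atTop,
      0 ≤ (n : ℝ) ^ (k + 1) *
          ∫ s in (tc k c n)..1, s ^ m * Real.exp (-(n : ℝ) * s ^ (k + 1)) ∧
      (n : ℝ) ^ (k + 1) *
          (∫ s in (tc k c n)..1, s ^ m * Real.exp (-(n : ℝ) * s ^ (k + 1)))
        ≤ Real.exp (-c) * ((k : ℝ) + 2) ^ k / Real.log n := by
    filter_upwards [hev1, hev2] with n hL' hn2
    set L : ℝ := Real.log n with hLdef
    set A : ℝ := ((k : ℝ) / 2 + 1) * L + ((k : ℝ) / 2) * Real.log L + c with hAdef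
    have habs := abs_nonneg c
    have hm0 : (0 : ℝ) ≤ (m : ℝ) := Nat.cast_nonneg m
    have hL1 : (1 : ℝ) ≤ L := by linarith
    have hL0 : (0 : ℝ) < L := by linarith
    have hlogL : Real.log L ≤ L - 1 := Real.log_le_sub_one_of_pos hL0
    have hlogL0 : (0 : ℝ) ≤ Real.log L := Real.log_nonneg hL1
    have hkL : (0 : ℝ) ≤ ((k : ℝ) - 1) * L := by nlinarith
    have hkLog : (0 : ℝ) ≤ (k : ℝ) * Real.log L := by positivity
    have hkLog2 : (0 : ℝ) ≤ (k : ℝ) * (L - 1 - Real.log L) := by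
      apply mul_nonneg (by positivity); linarith
    have hAL : L ≤ A := by
      rw [hAdef]
      nlinarith [neg_abs_le c]
    have hAU : A ≤ ((k : ℝ) + 2) * L := by
      rw [hAdef]
      nlinarith [le_abs_self c]
    have hA0 : (0 : ℝ) < A := by linarith
    have hmA : (m : ℝ) ≤ A := by linarith
    have hn0 : (0 : ℝ) < (n : ℝ) := by nlinarith
    have hT0 : (0 : ℝ) < A / n := div_pos hA0 hn0
    have hT1 : A / (n : ℝ) ≤ 1 := (div_le_one hn0).2 (le_trans hAU hn2)
    have ht : tc k c n = (A / (n : ℝ)) ^ ((1 : ℝ) / ((k : ℝ) + 1)) := by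
      rw [hAdef, hLdef]; rfl
    have ht0 : 0 < tc k c n := by rw [ht]; exact Real.rpow_pos_of_pos hT0 _
    have ht1 : tc k c n ≤ 1 := by
      rw [ht]; exact Real.rpow_le_one hT0.le hT1 (by positivity)
    have htk : tc k c n ^ (k + 1) = A / n := by
      rw [ht, ← Real.rpow_natCast ((A / (n : ℝ)) ^ ((1 : ℝ) / ((k : ℝ) + 1))) (k + 1),
        ← Real.rpow_mul hT0.le]
      push_cast
      rw [one_div, inv_mul_cancel₀ hkne, Real.rpow_one]
    have hnT : (n : ℝ) * tc k c n ^ (k + 1) = A := by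
      rw [htk]; field_simp
    constructor
    · apply mul_nonneg (by positivity)
      apply intervalIntegral.integral_nonneg ht1
      intro s hs
      have : 0 < s := lt_of_lt_of_le ht0 hs.1
      positivity
    · have hfc : Continuous (fun s : ℝ => s ^ m * Real.exp (-(n : ℝ) * s ^ (k + 1))) := by
        fun_prop
      have hgc : Continuous (fun s : ℝ =>
          (tc k c n) ^ m * Real.exp (-A) *
            Real.exp (-(A / tc k c n) * (s - tc k c n))) := by fun_prop
      have hIle : (∫ s in (tc k c n)..1, s ^ m * Real.exp (-(n : ℝ) * s ^ (k + 1)))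
          ≤ ∫ s in (tc k c n)..1,
              (tc k c n) ^ m * Real.exp (-A) *
                Real.exp (-(A / tc k c n) * (s - tc k c n)) :=
        intervalIntegral.integral_mono_on ht1 (hfc.intervalIntegrable _ _)
          (hgc.intervalIntegrable _ _)
          (aux_pointwise k m hk n A (tc k c n) ht0 hA0 hmA hnT)
      have hgval : (∫ s in (tc k c n)..1,
            (tc k c n) ^ m * Real.exp (-A) *
              Real.exp (-(A / tc k c n) * (s - tc k c n)))
          = (tc k c n) ^ m * Real.exp (-A) *
            ∫ s in (tc k c n)..1, Real.exp (-(A / tc k c n) * (s - tc k c n)) :=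
        intervalIntegral.integral_const_mul _ _
      have hlam : 0 < A / tc k c n := div_pos hA0 ht0
      have hexp_le := aux_exp_integral (tc k c n) (A / tc k c n) ht1 hlam
      rw [one_div_div] at hexp_le
      have hIle2 : (∫ s in (tc k c n)..1, s ^ m * Real.exp (-(n : ℝ) * s ^ (k + 1)))
          ≤ (tc k c n) ^ m * Real.exp (-A) * (tc k c n / A) := by
        rw [hgval] at hIle
        refine le_trans hIle (mul_le_mul_of_nonneg_left hexp_le (by positivity))
      have heq := aux_calc k m n c L A (tc k c n) hn0 hLdef hL0 hA0 hm2 hAdef ht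
      have hfinal : Real.exp (-c) * A ^ ((k : ℝ) / 2 - 1) * L ^ (-(k : ℝ) / 2)
          ≤ Real.exp (-c) * ((k : ℝ) + 2) ^ k / L := by
        have hstep : A ^ ((k : ℝ) / 2 - 1) ≤ ((k : ℝ) + 2) ^ k * L ^ ((k : ℝ) / 2 - 1) := by
          rcases le_or_gt ((k : ℝ) / 2 - 1) 0 with hneg | hpos
          · have h1 : A ^ ((k : ℝ) / 2 - 1) ≤ L ^ ((k : ℝ) / 2 - 1) :=
              Real.rpow_le_rpow_of_nonpos hL0 hAL hneg
            have h2 : (1 : ℝ) ≤ ((k : ℝ) + 2) ^ k := one_le_pow₀ (by linarith)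
            calc A ^ ((k : ℝ) / 2 - 1) ≤ L ^ ((k : ℝ) / 2 - 1) := h1
              _ = 1 * L ^ ((k : ℝ) / 2 - 1) := (one_mul _).symm
              _ ≤ ((k : ℝ) + 2) ^ k * L ^ ((k : ℝ) / 2 - 1) :=
                  mul_le_mul_of_nonneg_right h2 (Real.rpow_nonneg hL0.le _)
          · have h1 : A ^ ((k : ℝ) / 2 - 1) ≤ (((k : ℝ) + 2) * L) ^ ((k : ℝ) / 2 - 1) :=
              Real.rpow_le_rpow hA0.le hAU hpos.le
            rw [Real.mul_rpow (by positivity) hL0.le] at h1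
            have h2 : ((k : ℝ) + 2) ^ ((k : ℝ) / 2 - 1) ≤ ((k : ℝ) + 2) ^ ((k : ℕ) : ℝ) :=
              Real.rpow_le_rpow_of_exponent_le (by linarith) (by push_cast; linarith)
            rw [Real.rpow_natCast] at h2
            calc A ^ ((k : ℝ) / 2 - 1)
                ≤ ((k : ℝ) + 2) ^ ((k : ℝ) / 2 - 1) * L ^ ((k : ℝ) / 2 - 1) := h1
              _ ≤ ((k : ℝ) + 2) ^ k * L ^ ((k : ℝ) / 2 - 1) :=
                  mul_le_mul_of_nonneg_right h2 (Real.rpow_nonneg hL0.le _)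
        have hLL : L ^ ((k : ℝ) / 2 - 1) * L ^ (-(k : ℝ) / 2) = L⁻¹ := by
          rw [← Real.rpow_add hL0]
          have h3 : (k : ℝ) / 2 - 1 + -(k : ℝ) / 2 = -1 := by ring
          rw [h3, Real.rpow_neg_one]
        have h4 : A ^ ((k : ℝ) / 2 - 1) * L ^ (-(k : ℝ) / 2)
            ≤ ((k : ℝ) + 2) ^ k / L := by
          calc A ^ ((k : ℝ) / 2 - 1) * L ^ (-(k : ℝ) / 2)
              ≤ ((k : ℝ) + 2) ^ k * L ^ ((k : ℝ) / 2 - 1) * L ^ (-(k : ℝ) / 2) :=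
                mul_le_mul_of_nonneg_right hstep (Real.rpow_nonneg hL0.le _)
            _ = ((k : ℝ) + 2) ^ k * (L ^ ((k : ℝ) / 2 - 1) * L ^ (-(k : ℝ) / 2)) :=
                mul_assoc _ _ _
            _ = ((k : ℝ) + 2) ^ k * L⁻¹ := by rw [hLL]
            _ = ((k : ℝ) + 2) ^ k / L := (div_eq_mul_inv _ _).symm
        calc Real.exp (-c) * A ^ ((k : ℝ) / 2 - 1) * L ^ (-(k : ℝ) / 2)
            = Real.exp (-c) * (A ^ ((k : ℝ) / 2 - 1) * L ^ (-(k : ℝ) / 2)) :=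
              mul_assoc _ _ _
          _ ≤ Real.exp (-c) * (((k : ℝ) + 2) ^ k / L) :=
              mul_le_mul_of_nonneg_left h4 (Real.exp_nonneg _)
          _ = Real.exp (-c) * ((k : ℝ) + 2) ^ k / L := (mul_div_assoc _ _ _).symm
      calc (n : ℝ) ^ (k + 1) *
            ∫ s in (tc k c n)..1, s ^ m * Real.exp (-(n : ℝ) * s ^ (k + 1))
          ≤ (n : ℝ) ^ (k + 1) *
              ((tc k c n) ^ m * Real.exp (-A) * (tc k c n / A)) :=
            mul_le_mul_of_nonneg_left hIle2 (by positivity)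
        _ = Real.exp (-c) * A ^ ((k : ℝ) / 2 - 1) * L ^ (-(k : ℝ) / 2) := heq
        _ ≤ Real.exp (-c) * ((k : ℝ) + 2) ^ k / L := hfinal
  exact tendsto_of_tendsto_of_tendsto_of_le_of_le' tendsto_const_nhds hbound
    (hmain.mono fun n h => h.1) (hmain.mono fun n h => h.2)
end

section
/- Let k ≥ 1 and m ≥ 0 be fixed integers and c ∈ ℝ. In the random clique complex model, let R*_{k−1,m}(t) be the number of k-element subsets σ of [n] such that for some s ∈ [t,1], σ is a clique of G(n,s) and the number of vertices v ∈ [n] ∖ σ with σ ∪ {v} a clique of G(n,s) is at most m. Then lim_{n→∞} E[R*_{k−1,m}(t_c(k,n))] = 0. -/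
open MeasureTheory

/-- `R*_{k−1,m}(t)`: the number of `k`-element subsets `σ` of `[n]` such that, for some
`s ∈ [t,1]`, `σ` is a clique of `G(n,s)` and the number of vertices `v ∉ σ` with
`σ ∪ {v}` a clique of `G(n,s)` is at most `m`. -/
noncomputable def RStar {n : ℕ} (k m : ℕ) (t : ℝ) (ω : EdgeIdx n → ℝ) : ℕ :=
  Nat.card {σ : Finset (Fin n) // σ.card = k ∧
    ∃ s, t ≤ s ∧ s ≤ 1 ∧ IsClique ω s σ ∧
      Nat.card {v : Fin n // v ∉ σ ∧ IsClique ω s (insert v σ)} ≤ m}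

/-! ### Auxiliary material -/

section Aux

open Finset Filter
open scoped ENNReal

instance inst_s9 : IsProbabilityMeasure unif := by
  constructor
  simp [unif, Real.volume_Icc]

instance (n : ℕ) : IsProbabilityMeasure (Pn n) := by
  unfold Pn; infer_instance

variable {n : ℕ}

lemma eV_comm (ω : EdgeIdx n → ℝ) (i j : Fin n) : eV ω i j = eV ω j i := by
  unfold eV
  rcases eq_or_ne i j with h | h
  · simp [h]
  · rw [dif_neg h, dif_neg h.symm]
    congr 1
    exact Subtype.ext Sym2.eq_swap

lemma measurable_eV (v i : Fin n) : Measurable fun ω : EdgeIdx n → ℝ => eV ω v i := by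
  unfold eV
  by_cases h : v = i
  · simp only [dif_pos h]; exact measurable_const
  · simp only [dif_neg h]; exact measurable_pi_apply _

/-- The event that all the edges from `v` to `σ` have weight at most `t`. -/
def Succ (σ : Finset (Fin n)) (t : ℝ) (v : Fin n) : Set (EdgeIdx n → ℝ) :=
  {ω | ∀ i ∈ σ, eV ω v i ≤ t}

lemma measurableSet_Succ (σ : Finset (Fin n)) (t : ℝ) (v : Fin n) :
    MeasurableSet (Succ σ t v) := by
  have h : Succ σ t v = ⋂ i ∈ σ, {ω : EdgeIdx n → ℝ | eV ω v i ≤ t} := by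
    ext ω; simp [Succ]
  rw [h]
  exact MeasurableSet.biInter (σ : Set (Fin n)).to_countable
    fun i _ => measurableSet_le (measurable_eV v i) measurable_const

/-- The edge `{w, i}` for `w ≠ i`. -/
def eIdx (w i : Fin n) (h : w ≠ i) : EdgeIdx n :=
  ⟨s(w, i), by simp [Sym2.mk_isDiag_iff, h]⟩

lemma eV_eIdx (ω : EdgeIdx n → ℝ) (w i : Fin n) (h : w ≠ i) :
    ω (eIdx w i h) = eV ω w i := by
  unfold eV eIdx
  rw [dif_neg h]

lemma unif_Iic_s9 {t : ℝ} (ht0 : 0 ≤ t) (ht1 : t ≤ 1) :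
    unif (Set.Iic t) = ENNReal.ofReal t := by
  rw [unif, Measure.restrict_apply measurableSet_Iic]
  have h : Set.Iic t ∩ Set.Icc 0 1 = Set.Icc 0 t := by
    ext x
    simp only [Set.mem_inter_iff, Set.mem_Iic, Set.mem_Icc]
    exact ⟨fun h => ⟨h.2.1, h.1⟩, fun h => ⟨h.2, h.1, h.2.trans ht1⟩⟩
  rw [h, Real.volume_Icc, sub_zero]

lemma meas_Succ (σ : Finset (Fin n)) {t : ℝ} (ht0 : 0 ≤ t) (ht1 : t ≤ 1) {w : Fin n}
    (hw : w ∉ σ) : Pn n (Succ σ t w) = ENNReal.ofReal t ^ σ.card := by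
  classical
  set S : EdgeIdx n → Set ℝ := fun e =>
    if (w ∈ (e : Sym2 (Fin n)) ∧ ∃ i ∈ σ, i ∈ (e : Sym2 (Fin n))) then Set.Iic t
    else Set.univ with hS
  have hset : Succ σ t w = Set.pi Set.univ S := by
    ext ω
    simp only [Succ, Set.mem_pi, Set.mem_univ, forall_true_left, Set.mem_setOf_eq]
    constructor
    · intro h e
      by_cases hc : w ∈ (e : Sym2 (Fin n)) ∧ ∃ i ∈ σ, i ∈ (e : Sym2 (Fin n))
      · obtain ⟨hwc, i, hi, hie⟩ := hc
        have hwi : w ≠ i := fun hh => hw (hh ▸ hi)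
        have he : (e : Sym2 (Fin n)) = s(w, i) := (Sym2.mem_and_mem_iff hwi).1 ⟨hwc, hie⟩
        have he' : e = eIdx w i hwi := Subtype.ext he
        have hc' : w ∈ ((eIdx w i hwi : EdgeIdx n) : Sym2 (Fin n)) ∧
            ∃ j ∈ σ, j ∈ ((eIdx w i hwi : EdgeIdx n) : Sym2 (Fin n)) :=
          ⟨Sym2.mem_mk_left _ _, i, hi, Sym2.mem_mk_right _ _⟩
        rw [he']
        simp only [hS]
        rw [if_pos hc', Set.mem_Iic, eV_eIdx ω w i hwi]
        exact h i hi
      · rw [hS]; simp only [if_neg hc]; trivial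
    · intro h i hi
      have hwi : w ≠ i := fun hh => hw (hh ▸ hi)
      have hmem := h (eIdx w i hwi)
      have hc : w ∈ ((eIdx w i hwi : EdgeIdx n) : Sym2 (Fin n)) ∧
          ∃ j ∈ σ, j ∈ ((eIdx w i hwi : EdgeIdx n) : Sym2 (Fin n)) :=
        ⟨Sym2.mem_mk_left _ _, i, hi, Sym2.mem_mk_right _ _⟩
      simp only [hS] at hmem
      rw [if_pos hc] at hmem
      rw [Set.mem_Iic] at hmem
      rw [← eV_eIdx ω w i hwi]
      exact hmem
  rw [hset]
  unfold Pn
  rw [Measure.pi_pi]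
  have hval : ∀ e : EdgeIdx n, unif (S e) =
      if (w ∈ (e : Sym2 (Fin n)) ∧ ∃ i ∈ σ, i ∈ (e : Sym2 (Fin n))) then ENNReal.ofReal t
      else 1 := by
    intro e
    simp only [hS]
    by_cases hc : w ∈ (e : Sym2 (Fin n)) ∧ ∃ i ∈ σ, i ∈ (e : Sym2 (Fin n))
    · simp only [if_pos hc]; exact unif_Iic_s9 ht0 ht1
    · simp only [if_neg hc]; exact measure_univ
  simp_rw [hval]
  rw [Finset.prod_ite, Finset.prod_const, Finset.prod_const_one, mul_one]
  congr 1
  refine (Finset.card_bij (fun (a : Fin n) (ha : a ∈ σ) =>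
    eIdx w a (fun hh => hw (hh ▸ ha))) ?_ ?_ ?_).symm
  · intro a ha
    simp only [Finset.mem_filter, Finset.mem_univ, true_and]
    exact ⟨Sym2.mem_mk_left _ _, a, ha, Sym2.mem_mk_right _ _⟩
  · intro a₁ ha₁ a₂ ha₂ h
    have := congrArg Subtype.val h
    simp only [eIdx, Sym2.eq, Sym2.rel_iff', Prod.mk.injEq, Prod.swap_prod_mk] at this
    rcases this with ⟨-, h2⟩ | ⟨h1, h2⟩
    · exact h2
    · exact h2.trans h1
  · intro e he
    simp only [Finset.mem_filter, Finset.mem_univ, true_and] at he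
    obtain ⟨hwc, i, hi, hie⟩ := he
    have hwi : w ≠ i := fun hh => hw (hh ▸ hi)
    have he' : (e : Sym2 (Fin n)) = s(w, i) := (Sym2.mem_and_mem_iff hwi).1 ⟨hwc, hie⟩
    exact ⟨i, hi, Subtype.ext he'.symm⟩

/-- Independence of two events depending on disjoint sets of coordinates,
for a product of copies of a probability measure. -/
lemma indep_split {ι : Type*} [Fintype ι] (p : ι → Prop) [DecidablePred p]
    {μ : Measure ℝ} [IsProbabilityMeasure μ]
    {S₁ S₂ : Set (ι → ℝ)} (h₁ : MeasurableSet S₁) (h₂ : MeasurableSet S₂)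
    (d₁ : ∀ ω ω' : ι → ℝ, (∀ i, p i → ω i = ω' i) → ω ∈ S₁ → ω' ∈ S₁)
    (d₂ : ∀ ω ω' : ι → ℝ, (∀ i, ¬ p i → ω i = ω' i) → ω ∈ S₂ → ω' ∈ S₂) :
    Measure.pi (fun _ : ι => μ) (S₁ ∩ S₂)
      = Measure.pi (fun _ : ι => μ) S₁ * Measure.pi (fun _ : ι => μ) S₂ := by
  classical
  set π := MeasurableEquiv.piEquivPiSubtypeProd (fun _ : ι => ℝ) p with hπ
  have hmp := measurePreserving_piEquivPiSubtypeProd (fun _ : ι => μ) p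
  set ν₁ := Measure.pi fun _ : Subtype p => μ with hν₁
  set ν₂ := Measure.pi fun _ : {i // ¬ p i} => μ with hν₂
  haveI : IsProbabilityMeasure ν₁ := by rw [hν₁]; infer_instance
  haveI : IsProbabilityMeasure ν₂ := by rw [hν₂]; infer_instance
  set e₁ : (Subtype p → ℝ) → (ι → ℝ) := fun x i => if h : p i then x ⟨i, h⟩ else 0 with he₁def
  set e₂ : ({i // ¬ p i} → ℝ) → (ι → ℝ) :=
    fun x i => if h : ¬ p i then x ⟨i, h⟩ else 0 with he₂def
  have he₁ : Measurable e₁ := by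
    apply measurable_pi_lambda
    intro i
    by_cases h : p i
    · simp only [he₁def, dif_pos h]; exact measurable_pi_apply _
    · simp only [he₁def, dif_neg h]; exact measurable_const
  have he₂ : Measurable e₂ := by
    apply measurable_pi_lambda
    intro i
    by_cases h : ¬ p i
    · simp only [he₂def, dif_pos h]; exact measurable_pi_apply _
    · simp only [he₂def, dif_neg h]; exact measurable_const
  set Y₁ : Set (Subtype p → ℝ) := e₁ ⁻¹' S₁ with hY₁
  set Y₂ : Set ({i // ¬ p i} → ℝ) := e₂ ⁻¹' S₂ with hY₂
  have hπω : ∀ ω : ι → ℝ,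
      π ω = (fun i : Subtype p => ω i, fun i : {i // ¬ p i} => ω i) := fun _ => rfl
  have key₁ : ∀ ω : ι → ℝ, ω ∈ S₁ ↔ (fun i : Subtype p => ω i) ∈ Y₁ := by
    intro ω
    have hag : ∀ i, p i → ω i = e₁ (fun j : Subtype p => ω j) i := by
      intro i h; simp only [he₁def, dif_pos h]
    exact ⟨fun hm => d₁ _ _ hag hm, fun hm => d₁ _ _ (fun i h => (hag i h).symm) hm⟩
  have key₂ : ∀ ω : ι → ℝ, ω ∈ S₂ ↔ (fun i : {i // ¬ p i} => ω i) ∈ Y₂ := by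
    intro ω
    have hag : ∀ i, ¬ p i → ω i = e₂ (fun j : {i // ¬ p i} => ω j) i := by
      intro i h; simp only [he₂def, dif_pos h]
    exact ⟨fun hm => d₂ _ _ hag hm, fun hm => d₂ _ _ (fun i h => (hag i h).symm) hm⟩
  have hm₁ : MeasurableSet Y₁ := he₁ h₁
  have hm₂ : MeasurableSet Y₂ := he₂ h₂
  have c₁ : S₁ ∩ S₂ = π ⁻¹' (Y₁ ×ˢ Y₂) := by
    ext ω
    simp only [Set.mem_inter_iff, Set.mem_preimage, hπω, Set.mem_prod]
    exact and_congr (key₁ ω) (key₂ ω)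
  have c₂ : S₁ = π ⁻¹' (Y₁ ×ˢ Set.univ) := by
    ext ω
    simp only [Set.mem_preimage, hπω, Set.mem_prod, Set.mem_univ, and_true]
    exact key₁ ω
  have c₃ : S₂ = π ⁻¹' ((Set.univ : Set (Subtype p → ℝ)) ×ˢ Y₂) := by
    ext ω
    simp only [Set.mem_preimage, hπω, Set.mem_prod, Set.mem_univ, true_and]
    exact key₂ ω
  rw [c₁, c₂, c₃,
    hmp.measure_preimage ((hm₁.prod hm₂).nullMeasurableSet),
    hmp.measure_preimage ((hm₁.prod MeasurableSet.univ).nullMeasurableSet),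
    hmp.measure_preimage ((MeasurableSet.univ.prod hm₂).nullMeasurableSet),
    Measure.prod_prod, Measure.prod_prod, Measure.prod_prod]
  simp [measure_univ]

lemma meas_biInter_fail (σ : Finset (Fin n)) {t : ℝ} (ht0 : 0 ≤ t) (ht1 : t ≤ 1) :
    ∀ T : Finset (Fin n), Disjoint T σ →
      Pn n (⋂ v ∈ T, (Succ σ t v)ᶜ) = (1 - ENNReal.ofReal t ^ σ.card) ^ T.card := by
  classical
  intro T
  induction T using Finset.induction_on with
  | empty => intro _; simp
  | @insert w T' hwT' ih =>
    intro hdisj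
    rw [Finset.disjoint_insert_left] at hdisj
    obtain ⟨hwσ, hd'⟩ := hdisj
    rw [Finset.set_biInter_insert, Finset.card_insert_of_notMem hwT', pow_succ']
    have hsplit :
        Pn n ((Succ σ t w)ᶜ ∩ ⋂ v ∈ T', (Succ σ t v)ᶜ)
          = Pn n ((Succ σ t w)ᶜ) * Pn n (⋂ v ∈ T', (Succ σ t v)ᶜ) := by
      unfold Pn
      refine indep_split (μ := unif) (fun e : EdgeIdx n => w ∈ (e : Sym2 (Fin n))) ?_ ?_ ?_ ?_
      · exact (measurableSet_Succ σ t w).compl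
      · exact Finset.measurableSet_biInter T' fun v _ => (measurableSet_Succ σ t v).compl
      · intro ω ω' hag hmem hs
        apply hmem
        intro i hi
        have hwi : w ≠ i := fun hh => hwσ (hh ▸ hi)
        have : eV ω w i = eV ω' w i := by
          rw [← eV_eIdx ω w i hwi, ← eV_eIdx ω' w i hwi]
          exact hag _ (Sym2.mem_mk_left _ _)
        rw [this]
        exact hs i hi
      · intro ω ω' hag hmem
        rw [Set.mem_iInter₂] at hmem ⊢
        intro v hv hs
        apply hmem v hv
        intro i hi
        have hvw : v ≠ w := fun hh => hwT' (hh ▸ hv)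
        have hvi : v ≠ i := fun hh => (Finset.disjoint_left.mp hd' hv) (hh ▸ hi)
        have hne : ¬ w ∈ ((eIdx v i hvi : EdgeIdx n) : Sym2 (Fin n)) := by
          simp only [eIdx, Sym2.mem_iff]
          push_neg
          exact ⟨fun hh => hvw hh.symm, fun hh => hwσ (hh ▸ hi)⟩
        have : eV ω v i = eV ω' v i := by
          rw [← eV_eIdx ω v i hvi, ← eV_eIdx ω' v i hvi]
          exact hag _ hne
        rw [this]
        exact hs i hi
    rw [hsplit, ih hd']
    congr 1
    rw [prob_compl_eq_one_sub (measurableSet_Succ σ t w), meas_Succ σ ht0 ht1 hwσ]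

/-- The (measurable) event that at most `m` vertices outside `σ` have all their
edges to `σ` of weight at most `t`. -/
def EQset (σ : Finset (Fin n)) (t : ℝ) (m : ℕ) : Set (EdgeIdx n → ℝ) :=
  {ω | Nat.card {v : Fin n // v ∉ σ ∧ ∀ i ∈ σ, eV ω v i ≤ t} ≤ m}

lemma natCard_eq_filterCard (σ : Finset (Fin n)) (t : ℝ) (ω : EdgeIdx n → ℝ)
    [DecidablePred fun v : Fin n => v ∉ σ ∧ ∀ i ∈ σ, eV ω v i ≤ t] :
    Nat.card {v : Fin n // v ∉ σ ∧ ∀ i ∈ σ, eV ω v i ≤ t}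
      = (Finset.univ.filter fun v : Fin n => v ∉ σ ∧ ∀ i ∈ σ, eV ω v i ≤ t).card := by
  rw [Nat.card_eq_fintype_card, Fintype.card_subtype]

lemma measurableSet_EQset (σ : Finset (Fin n)) (t : ℝ) (m : ℕ) :
    MeasurableSet (EQset σ t m) := by
  classical
  have hmeas : ∀ v : Fin n, MeasurableSet {ω : EdgeIdx n → ℝ | v ∉ σ ∧ ∀ i ∈ σ, eV ω v i ≤ t} := by
    intro v
    by_cases hv : v ∈ σ
    · have : {ω : EdgeIdx n → ℝ | v ∉ σ ∧ ∀ i ∈ σ, eV ω v i ≤ t} = ∅ := by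
        ext ω; simp [hv]
      rw [this]; exact MeasurableSet.empty
    · have : {ω : EdgeIdx n → ℝ | v ∉ σ ∧ ∀ i ∈ σ, eV ω v i ≤ t} = Succ σ t v := by
        ext ω; simp [hv, Succ]
      rw [this]; exact measurableSet_Succ σ t v
  have hg : Measurable fun ω : EdgeIdx n → ℝ =>
      ∑ v : Fin n, (if (v ∉ σ ∧ ∀ i ∈ σ, eV ω v i ≤ t) then (1 : ℝ) else 0) := by
    apply Finset.measurable_sum
    intro v _
    exact Measurable.ite (hmeas v) measurable_const measurable_const
  have hset : EQset σ t m = {ω : EdgeIdx n → ℝ |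
      (∑ v : Fin n, (if (v ∉ σ ∧ ∀ i ∈ σ, eV ω v i ≤ t) then (1 : ℝ) else 0)) ≤ (m : ℝ)} := by
    ext ω
    simp only [EQset, Set.mem_setOf_eq]
    rw [natCard_eq_filterCard σ t ω, Finset.sum_boole, Nat.cast_le]
  rw [hset]
  exact measurableSet_le hg measurable_const

lemma meas_EQset_le (σ : Finset (Fin n)) {t : ℝ} (ht0 : 0 ≤ t) (ht1 : t ≤ 1) (m : ℕ) :
    Pn n (EQset σ t m)
      ≤ ((Finset.univ \ σ : Finset (Fin n)).card.choose
            ((Finset.univ \ σ : Finset (Fin n)).card - m) : ℝ≥0∞) *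
        (1 - ENNReal.ofReal t ^ σ.card) ^ ((Finset.univ \ σ : Finset (Fin n)).card - m) := by
  classical
  set r := (Finset.univ \ σ : Finset (Fin n)).card - m with hr
  have hsub : EQset σ t m ⊆
      ⋃ T ∈ Finset.powersetCard r (Finset.univ \ σ : Finset (Fin n)),
        ⋂ v ∈ T, (Succ σ t v)ᶜ := by
    intro ω hω
    have hcard : (Finset.univ.filter fun v : Fin n => v ∉ σ ∧ ∀ i ∈ σ, eV ω v i ≤ t).card ≤ m := by
      have := hω
      rwa [EQset, Set.mem_setOf_eq, natCard_eq_filterCard σ t ω] at this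
    set Fl := (Finset.univ \ σ).filter (fun v : Fin n => ¬ (∀ i ∈ σ, eV ω v i ≤ t)) with hFl
    have hsplit := Finset.card_filter_add_card_filter_not
      (s := (Finset.univ \ σ : Finset (Fin n))) (p := fun v : Fin n => ∀ i ∈ σ, eV ω v i ≤ t)
    have heqf : ((Finset.univ \ σ : Finset (Fin n)).filter
        (fun v : Fin n => ∀ i ∈ σ, eV ω v i ≤ t))
        = Finset.univ.filter fun v : Fin n => v ∉ σ ∧ ∀ i ∈ σ, eV ω v i ≤ t := by
      ext v
      simp [Finset.mem_sdiff, Finset.mem_filter, and_assoc]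
    have hFlcard : r ≤ Fl.card := by
      rw [heqf] at hsplit
      beta_reduce at hsplit
      rw [← hFl] at hsplit
      omega
    obtain ⟨T, hTsub, hTcard⟩ := Finset.exists_subset_card_eq hFlcard
    have hT1 : T ∈ Finset.powersetCard r (Finset.univ \ σ : Finset (Fin n)) :=
      Finset.mem_powersetCard.2 ⟨hTsub.trans (Finset.filter_subset _ _), hTcard⟩
    have hT2 : ω ∈ ⋂ v ∈ T, (Succ σ t v)ᶜ := by
      rw [Set.mem_iInter₂]
      intro v hv
      have hvFl := hTsub hv
      rw [hFl, Finset.mem_filter] at hvFl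
      exact fun hS => hvFl.2 (fun i hi => hS i hi)
    exact Set.mem_biUnion hT1 hT2
  calc Pn n (EQset σ t m)
      ≤ Pn n (⋃ T ∈ Finset.powersetCard r (Finset.univ \ σ : Finset (Fin n)),
          ⋂ v ∈ T, (Succ σ t v)ᶜ) := measure_mono hsub
    _ ≤ ∑ T ∈ Finset.powersetCard r (Finset.univ \ σ : Finset (Fin n)),
          Pn n (⋂ v ∈ T, (Succ σ t v)ᶜ) := measure_biUnion_finset_le _ _
    _ = ∑ T ∈ Finset.powersetCard r (Finset.univ \ σ : Finset (Fin n)),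
          (1 - ENNReal.ofReal t ^ σ.card) ^ r := by
        apply Finset.sum_congr rfl
        intro T hT
        rw [Finset.mem_powersetCard] at hT
        have hdisj : Disjoint T σ := by
          rw [Finset.disjoint_left]
          intro v hv
          have := hT.1 hv
          rw [Finset.mem_sdiff] at this
          exact this.2
        rw [meas_biInter_fail σ ht0 ht1 T hdisj, hT.2]
    _ = ((Finset.univ \ σ : Finset (Fin n)).card.choose r : ℝ≥0∞) *
          (1 - ENNReal.ofReal t ^ σ.card) ^ r := by
        rw [Finset.sum_const, Finset.card_powersetCard, nsmul_eq_mul]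

lemma rstar_le_sum (k m : ℕ) {t : ℝ} (ht1 : t ≤ 1) (ω : EdgeIdx n → ℝ) :
    (RStar k m t ω : ℝ) ≤
      ∑ σ ∈ Finset.powersetCard k (Finset.univ : Finset (Fin n)),
        (EQset σ t m).indicator (fun _ => (1 : ℝ)) ω := by
  classical
  have hsum : ∑ σ ∈ Finset.powersetCard k (Finset.univ : Finset (Fin n)),
      (EQset σ t m).indicator (fun _ => (1 : ℝ)) ω
      = (((Finset.powersetCard k (Finset.univ : Finset (Fin n))).filter
          (fun σ => ω ∈ EQset σ t m)).card : ℝ) := by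
    rw [← Finset.sum_boole]
    apply Finset.sum_congr rfl
    intro σ _
    by_cases h : ω ∈ EQset σ t m <;> simp [Set.indicator_apply, h]
  rw [hsum]
  have hnat : RStar k m t ω ≤
      ((Finset.powersetCard k (Finset.univ : Finset (Fin n))).filter
        (fun σ => ω ∈ EQset σ t m)).card := by
    rw [RStar, Nat.card_eq_fintype_card, Fintype.card_subtype]
    apply Finset.card_le_card
    intro σ hσ
    rw [Finset.mem_filter] at hσ
    obtain ⟨-, hcardσ, s, hts, hs1, hcl, hcnt⟩ := hσ
    rw [Finset.mem_filter]
    refine ⟨Finset.mem_powersetCard_univ.2 hcardσ, ?_⟩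
    have hmap : ∀ v : Fin n, v ∉ σ → (∀ i ∈ σ, eV ω v i ≤ t) →
        IsClique ω s (insert v σ) := by
      intro v hv hA a ha b hb hab
      rcases Finset.mem_insert.1 ha with rfl | ha'
      · rcases Finset.mem_insert.1 hb with rfl | hb'
        · exact absurd rfl hab
        · exact (hA b hb').trans hts
      · rcases Finset.mem_insert.1 hb with rfl | hb'
        · rw [eV_comm]; exact (hA a ha').trans hts
        · exact hcl a ha' b hb' hab
    have hle : Nat.card {v : Fin n // v ∉ σ ∧ ∀ i ∈ σ, eV ω v i ≤ t}
        ≤ Nat.card {v : Fin n // v ∉ σ ∧ IsClique ω s (insert v σ)} := by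
      apply Nat.card_le_card_of_injective
        (fun x => ⟨x.1, x.2.1, hmap x.1 x.2.1 x.2.2⟩)
      intro x y hxy
      have h' : (x : Fin n) = (y : Fin n) := by
        simpa using congrArg Subtype.val hxy
      exact Subtype.ext h'
    exact hle.trans hcnt
  exact_mod_cast hnat

lemma integral_RStar_le (k m : ℕ) {t : ℝ} (ht0 : 0 ≤ t) (ht1 : t ≤ 1) (hkn : k + m ≤ n) :
    ∫ ω, (RStar k m t ω : ℝ) ∂ Pn n ≤
      (n.choose k : ℝ) * ((n - k).choose (n - k - m) : ℝ) * (1 - t ^ k) ^ (n - k - m) := by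
  classical
  set F : (EdgeIdx n → ℝ) → ℝ := fun ω =>
    ∑ σ ∈ Finset.powersetCard k (Finset.univ : Finset (Fin n)),
      (EQset σ t m).indicator (fun _ => (1 : ℝ)) ω with hF
  have hFint : Integrable F (Pn n) := by
    apply integrable_finset_sum
    intro σ _
    exact (integrable_const (1 : ℝ)).indicator (measurableSet_EQset σ t m)
  have hle : ∫ ω, (RStar k m t ω : ℝ) ∂ Pn n ≤ ∫ ω, F ω ∂ Pn n := by
    apply integral_mono_of_nonneg
    · exact Filter.Eventually.of_forall fun ω => by positivity
    · exact hFint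
    · exact Filter.Eventually.of_forall fun ω => rstar_le_sum k m ht1 ω
  refine hle.trans ?_
  have htk1 : ENNReal.ofReal t ^ k ≤ 1 := by
    apply pow_le_one₀ zero_le
    exact ENNReal.ofReal_le_one.2 ht1
  have hEQ : ∀ σ ∈ Finset.powersetCard k (Finset.univ : Finset (Fin n)),
      (Pn n (EQset σ t m)).toReal ≤
        ((n - k).choose (n - k - m) : ℝ) * (1 - t ^ k) ^ (n - k - m) := by
    intro σ hσ
    have hcardσ : σ.card = k := (Finset.mem_powersetCard_univ).1 hσ
    have hNcard : (Finset.univ \ σ : Finset (Fin n)).card = n - k := by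
      rw [Finset.card_univ_diff, hcardσ, Fintype.card_fin]
    have hbd := meas_EQset_le σ ht0 ht1 m
    rw [hNcard, hcardσ] at hbd
    have hne : (((n - k).choose (n - k - m) : ℝ≥0∞) *
        (1 - ENNReal.ofReal t ^ k) ^ (n - k - m)) ≠ ⊤ := by
      apply ENNReal.mul_ne_top (ENNReal.natCast_ne_top _)
      exact ENNReal.pow_ne_top (ENNReal.sub_ne_top ENNReal.one_ne_top)
    calc (Pn n (EQset σ t m)).toReal
        ≤ (((n - k).choose (n - k - m) : ℝ≥0∞) *
            (1 - ENNReal.ofReal t ^ k) ^ (n - k - m)).toReal :=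
          ENNReal.toReal_mono hne hbd
      _ = ((n - k).choose (n - k - m) : ℝ) * (1 - t ^ k) ^ (n - k - m) := by
          rw [ENNReal.toReal_mul, ENNReal.toReal_pow,
            ENNReal.toReal_sub_of_le htk1 ENNReal.one_ne_top, ENNReal.toReal_one,
            ENNReal.toReal_pow, ENNReal.toReal_ofReal ht0]
          simp
  have hint : ∫ ω, F ω ∂ Pn n =
      ∑ σ ∈ Finset.powersetCard k (Finset.univ : Finset (Fin n)),
        (Pn n (EQset σ t m)).toReal := by
    rw [hF, integral_finset_sum]
    · apply Finset.sum_congr rfl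
      intro σ _
      rw [integral_indicator_const (1 : ℝ) (measurableSet_EQset σ t m), smul_eq_mul, mul_one,
        measureReal_def]
    · intro σ _
      exact (integrable_const (1 : ℝ)).indicator (measurableSet_EQset σ t m)
  rw [hint]
  calc ∑ σ ∈ Finset.powersetCard k (Finset.univ : Finset (Fin n)),
        (Pn n (EQset σ t m)).toReal
      ≤ (Finset.powersetCard k (Finset.univ : Finset (Fin n))).card •
        (((n - k).choose (n - k - m) : ℝ) * (1 - t ^ k) ^ (n - k - m)) :=
        Finset.sum_le_card_nsmul _ _ _ hEQ
    _ = (n.choose k : ℝ) * (((n - k).choose (n - k - m) : ℝ) * (1 - t ^ k) ^ (n - k - m)) := by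
        rw [Finset.card_powersetCard, Finset.card_univ, Fintype.card_fin, nsmul_eq_mul]
    _ = (n.choose k : ℝ) * ((n - k).choose (n - k - m) : ℝ) * (1 - t ^ k) ^ (n - k - m) := by
        ring

end Aux

/-- For fixed `k ≥ 1`, `m ≥ 0` and `c ∈ ℝ`,
`E[R*_{k−1,m}(t_c(k,n))] → 0` as `n → ∞`. -/
theorem expectation_RStar_tendsto_zero (k m : ℕ) (hk : 1 ≤ k) (c : ℝ) :
    Filter.Tendsto
      (fun n : ℕ => ∫ ω, (RStar k m (tc k c n) ω : ℝ) ∂ Pn n)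
      Filter.atTop (nhds 0) := by
  have hk1 : (1 : ℝ) ≤ (k : ℝ) := by exact_mod_cast hk
  set ε : ℝ := 1 / ((k : ℝ) + 1) with hε
  have hεpos : 0 < ε := by rw [hε]; positivity
  set L : ℕ → ℝ := fun n =>
    ((k : ℝ) / 2 + 1) * Real.log n + ((k : ℝ) / 2) * Real.log (Real.log n) + c with hL
  set D : ℕ → ℝ := fun n => (n : ℝ) ^ (k + m) * Real.exp (-(1 / 2) * (n : ℝ) ^ ε) with hD
  -- `D` tends to zero
  have hcomp : Filter.Tendsto (fun n : ℕ => ((n : ℝ)) ^ ε) Filter.atTop Filter.atTop :=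
    (tendsto_rpow_atTop hεpos).comp tendsto_natCast_atTop_atTop
  have hDlim : Filter.Tendsto D Filter.atTop (nhds 0) := by
    have hmain := tendsto_rpow_mul_exp_neg_mul_atTop_nhds_zero
      (((k + m : ℕ) : ℝ) / ε) (1 / 2) (by norm_num)
    refine (hmain.comp hcomp).congr fun n => ?_
    show ((n : ℝ) ^ ε) ^ (((k + m : ℕ) : ℝ) / ε) * Real.exp (-(1 / 2) * (n : ℝ) ^ ε) = D n
    rw [hD]
    congr 1
    rw [← Real.rpow_mul (Nat.cast_nonneg n)]
    have hεne : ε ≠ 0 := ne_of_gt hεpos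
    have : ε * (((k + m : ℕ) : ℝ) / ε) = ((k + m : ℕ) : ℝ) := by field_simp
    rw [this, Real.rpow_natCast]
  -- log x / x → 0 and variants
  have hlogdiv : Filter.Tendsto (fun x : ℝ => Real.log x / x) Filter.atTop (nhds 0) := by
    have := Real.tendsto_pow_log_div_mul_add_atTop 1 0 1 one_ne_zero
    simpa using this
  have hloglogdiv : Filter.Tendsto (fun x : ℝ => Real.log (Real.log x) / x)
      Filter.atTop (nhds 0) := by
    refine squeeze_zero' ?_ ?_ hlogdiv
    · filter_upwards [Filter.eventually_ge_atTop (Real.exp 1)] with x hx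
      have hxpos : 0 < x := lt_of_lt_of_le (Real.exp_pos 1) hx
      have hlog1 : 1 ≤ Real.log x := (Real.le_log_iff_exp_le hxpos).2 hx
      have h0 : 0 ≤ Real.log (Real.log x) := Real.log_nonneg hlog1
      positivity
    · filter_upwards [Filter.eventually_ge_atTop (Real.exp 1)] with x hx
      have hxpos : 0 < x := lt_of_lt_of_le (Real.exp_pos 1) hx
      have hlog1 : 1 ≤ Real.log x := (Real.le_log_iff_exp_le hxpos).2 hx
      have hlogpos : 0 < Real.log x := lt_of_lt_of_le one_pos hlog1
      have h2 : Real.log (Real.log x) ≤ Real.log x :=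
        (Real.log_le_sub_one_of_pos hlogpos).trans (by linarith)
      gcongr
  have hcdiv : Filter.Tendsto (fun x : ℝ => c / x) Filter.atTop (nhds 0) := by
    simpa [div_eq_mul_inv] using tendsto_inv_atTop_zero.const_mul c
  have hLdiv : Filter.Tendsto (fun x : ℝ =>
      (((k : ℝ) / 2 + 1) * Real.log x + ((k : ℝ) / 2) * Real.log (Real.log x) + c) / x)
      Filter.atTop (nhds 0) := by
    have h1 := hlogdiv.const_mul ((k : ℝ) / 2 + 1)
    have h2 := hloglogdiv.const_mul ((k : ℝ) / 2)
    have h3 := (h1.add h2).add hcdiv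
    have h4 : ((k : ℝ) / 2 + 1) * 0 + ((k : ℝ) / 2) * 0 + 0 = 0 := by ring
    rw [h4] at h3
    exact h3.congr fun x => by ring
  have hLdivn : Filter.Tendsto (fun n : ℕ => L n / (n : ℝ)) Filter.atTop (nhds 0) := by
    have := hLdiv.comp tendsto_natCast_atTop_atTop
    exact this.congr fun n => rfl
  have hLtop : Filter.Tendsto (fun n : ℕ => L n) Filter.atTop Filter.atTop := by
    have t1 : Filter.Tendsto (fun x : ℝ => ((k : ℝ) / 2 + 1) * Real.log x)
        Filter.atTop Filter.atTop :=
      Real.tendsto_log_atTop.const_mul_atTop (by linarith)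
    have t2 : Filter.Tendsto (fun x : ℝ => ((k : ℝ) / 2) * Real.log (Real.log x))
        Filter.atTop Filter.atTop :=
      (Real.tendsto_log_atTop.comp Real.tendsto_log_atTop).const_mul_atTop (by linarith)
    have t3 := Filter.Tendsto.atTop_add_atTop t1 t2
    have t4 := Filter.tendsto_atTop_add_const_right Filter.atTop c t3
    exact t4.comp tendsto_natCast_atTop_atTop
  have hE1 : ∀ᶠ n : ℕ in Filter.atTop, 1 ≤ L n := hLtop.eventually_ge_atTop 1
  have hE2 : ∀ᶠ n : ℕ in Filter.atTop, L n ≤ (n : ℝ) := by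
    filter_upwards [hLdivn.eventually_lt_const (by norm_num : (0 : ℝ) < 1),
      Filter.eventually_ge_atTop 1] with n h hn
    have hnpos : (0 : ℝ) < n := by exact_mod_cast Nat.lt_of_lt_of_le Nat.zero_lt_one hn
    have := (div_lt_one hnpos).1 h
    linarith
  have hbound : ∀ᶠ n : ℕ in Filter.atTop,
      (∫ ω, (RStar k m (tc k c n) ω : ℝ) ∂ Pn n) ≤ D n := by
    filter_upwards [hE1, hE2, Filter.eventually_ge_atTop (2 * (k + m) + 2)] with n h1L hLn hn
    have hkmn : k + m ≤ n := by omega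
    have hnpos : (0 : ℝ) < n := by
      have h' : 0 < n := by omega
      exact_mod_cast h'
    have htc : tc k c n = (L n / (n : ℝ)) ^ ε := rfl
    have hLn0 : 0 ≤ L n / (n : ℝ) := div_nonneg (by linarith) hnpos.le
    have hLn1 : L n / (n : ℝ) ≤ 1 := (div_le_one hnpos).2 hLn
    have ht0 : 0 ≤ tc k c n := by rw [htc]; exact Real.rpow_nonneg hLn0 _
    have ht1 : tc k c n ≤ 1 := by rw [htc]; exact Real.rpow_le_one hLn0 hLn1 hεpos.le
    set t : ℝ := tc k c n with htdef
    refine (integral_RStar_le k m ht0 ht1 hkmn).trans ?_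
    have hmnk : m ≤ n - k := by omega
    have hrcast : ((n - k - m : ℕ) : ℝ) = (n : ℝ) - (k : ℝ) - (m : ℝ) := by
      rw [Nat.sub_sub, Nat.cast_sub hkmn]
      push_cast
      ring
    have hr2 : (n : ℝ) / 2 ≤ ((n - k - m : ℕ) : ℝ) := by
      rw [hrcast]
      have h2n : ((2 * (k + m) + 2 : ℕ) : ℝ) ≤ (n : ℝ) := by exact_mod_cast hn
      push_cast at h2n
      linarith
    have hc1 : (n.choose k : ℝ) ≤ (n : ℝ) ^ k := by
      exact_mod_cast Nat.choose_le_pow n k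
    have hc2 : ((n - k).choose (n - k - m) : ℝ) ≤ (n : ℝ) ^ m := by
      have hsymm : (n - k).choose (n - k - m) = (n - k).choose m := Nat.choose_symm hmnk
      have h' : (n - k).choose (n - k - m) ≤ n ^ m := by
        rw [hsymm]
        exact (Nat.choose_le_pow _ _).trans (Nat.pow_le_pow_left (Nat.sub_le n k) m)
      exact_mod_cast h'
    have htk1 : t ^ k ≤ 1 := pow_le_one₀ ht0 ht1
    have h1tk : 0 ≤ 1 - t ^ k := by linarith
    have hexp1 : 1 - t ^ k ≤ Real.exp (-(t ^ k)) := by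
      have := Real.add_one_le_exp (-(t ^ k))
      linarith
    have hkey : (1 / 2) * (n : ℝ) ^ ε ≤ ((n - k - m : ℕ) : ℝ) * t ^ k := by
      have htck : (n : ℝ) ^ (-(ε * (k : ℝ))) ≤ t ^ k := by
        have hb : (1 : ℝ) / (n : ℝ) ≤ L n / (n : ℝ) := by gcongr
        have h1 : t ^ k = (L n / (n : ℝ)) ^ (ε * (k : ℝ)) := by
          rw [htc, ← Real.rpow_natCast ((L n / (n : ℝ)) ^ ε) k,
            ← Real.rpow_mul hLn0]
        have h2 : ((1 : ℝ) / (n : ℝ)) ^ (ε * (k : ℝ)) ≤ (L n / (n : ℝ)) ^ (ε * (k : ℝ)) :=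
          Real.rpow_le_rpow (by positivity) hb (by positivity)
        have h3 : ((1 : ℝ) / (n : ℝ)) ^ (ε * (k : ℝ)) = (n : ℝ) ^ (-(ε * (k : ℝ))) := by
          rw [one_div, ← Real.rpow_neg_one (n : ℝ), ← Real.rpow_mul hnpos.le]
          norm_num
        rw [h1, ← h3]
        exact h2
      have hid : (n : ℝ) ^ (-(ε * (k : ℝ))) * (n : ℝ) = (n : ℝ) ^ ε := by
        nth_rewrite 2 [← Real.rpow_one (n : ℝ)]
        rw [← Real.rpow_add hnpos]
        congr 1
        have hkne : (k : ℝ) + 1 ≠ 0 := by positivity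
        rw [hε]
        field_simp
        ring
      calc (1 / 2) * (n : ℝ) ^ ε = (n : ℝ) ^ (-(ε * (k : ℝ))) * ((n : ℝ) / 2) := by
            rw [← hid]; ring
        _ ≤ t ^ k * ((n - k - m : ℕ) : ℝ) :=
            mul_le_mul htck hr2 (by positivity) (pow_nonneg ht0 k)
        _ = ((n - k - m : ℕ) : ℝ) * t ^ k := by ring
    have hexp : (1 - t ^ k) ^ (n - k - m) ≤ Real.exp (-(1 / 2) * (n : ℝ) ^ ε) := by
      calc (1 - t ^ k) ^ (n - k - m)
          ≤ (Real.exp (-(t ^ k))) ^ (n - k - m) := pow_le_pow_left₀ h1tk hexp1 _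
        _ = Real.exp (((n - k - m : ℕ) : ℝ) * (-(t ^ k))) := (Real.exp_nat_mul _ _).symm
        _ ≤ Real.exp (-(1 / 2) * (n : ℝ) ^ ε) := by
            apply Real.exp_le_exp.2
            rw [mul_neg, neg_mul]
            exact neg_le_neg hkey
    calc (n.choose k : ℝ) * ((n - k).choose (n - k - m) : ℝ) * (1 - t ^ k) ^ (n - k - m)
        ≤ (n : ℝ) ^ k * (n : ℝ) ^ m * Real.exp (-(1 / 2) * (n : ℝ) ^ ε) := by
          apply mul_le_mul (mul_le_mul hc1 hc2 (Nat.cast_nonneg _) (by positivity))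
            hexp (pow_nonneg h1tk _) (by positivity)
      _ = D n := by
          simp only [hD]
          rw [pow_add]
  refine squeeze_zero' (Filter.Eventually.of_forall fun n => ?_) hbound hDlim
  exact integral_nonneg fun ω => by positivity
end

section
/- Let k ≥ 1 be an integer, c ∈ ℝ, and let α be a real number with 0 < α < k(k+3)/2. For n ≥ 3 let t_c(k,n) := (((k/2+1)·log n + (k/2)·log log n + c)/n)^{1/(k+1)}, and for t ∈ [0,1] set μ(t) := (n−k)t^k and μ̲(t) := μ(t) − μ(t)^{3/5}. Then there exists n₀ ∈ ℕ such that for all n ≥ n₀, all integers m ≥ 1, and all t ∈ [t_c(k,n), 1]: if t < (α+1)·log(m)/m, then m < μ̲(t). -/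
set_option maxHeartbeats 1000000

/-- Let `k ≥ 1`, `c ∈ ℝ`, `0 < α < k(k+3)/2`; set `μ(t) = (n−k)t^k` and
`μ̲(t) = μ(t) − μ(t)^{3/5}`. There is `n₀` such that for all `n ≥ n₀` (with
`t_c(k,n) ∈ (0,1)`), all integers `m ≥ 1` and all `t ∈ [t_c(k,n), 1]`:
if `t < (α+1)·log m / m` then `m < μ̲(t)`. -/
theorem exists_n0_q_alpha_m (k : ℕ) (hk : 1 ≤ k) (c : ℝ) (α : ℝ)
    (hα0 : 0 < α) (hα : α < (k : ℝ) * ((k : ℝ) + 3) / 2) :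
    ∃ n₀ : ℕ, ∀ n : ℕ, n₀ ≤ n →
      tc k c n ∈ Set.Ioo (0 : ℝ) 1 ∧
      ∀ m : ℕ, 1 ≤ m → ∀ t : ℝ, tc k c n ≤ t → t ≤ 1 →
        t < (α + 1) * Real.log m / m →
        (m : ℝ) < ((n : ℝ) - k) * t ^ k - (((n : ℝ) - k) * t ^ k) ^ ((3 : ℝ) / 5) := by
  have hK1 : (1:ℝ) ≤ (k:ℝ) := by exact_mod_cast hk
  set A : ℝ := α + 1 with hAdef
  have hA1 : 1 < A := by simp only [hAdef]; linarith only [hα0]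
  have hA0 : 0 < A := by linarith only [hA1]
  have hden : (0:ℝ) < ((k:ℝ)+1) * ((k:ℝ)/2+1) := by positivity
  set θ : ℝ := A / (((k:ℝ)+1) * ((k:ℝ)/2+1)) with hθdef
  have hθ0 : 0 < θ := div_pos hA0 hden
  have hθ1 : θ < 1 := by
    rw [hθdef, div_lt_one hden]; simp only [hAdef]; nlinarith only [hα]
  set ε : ℝ := (1 - θ)/4 with hεdef
  have hε0 : 0 < ε := by simp only [hεdef]; linarith only [hθ1]
  have hε4 : ε ≤ 1/4 := by simp only [hεdef]; linarith only [hθ0]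
  set B : ℝ := Real.log A + Real.log ε⁻¹ with hBdef
  -- tendsto facts
  have hlog : Filter.Tendsto (fun n : ℕ => Real.log n) Filter.atTop Filter.atTop :=
    Real.tendsto_log_atTop.comp tendsto_natCast_atTop_atTop
  have hloglog : Filter.Tendsto (fun n : ℕ => Real.log (Real.log n)) Filter.atTop Filter.atTop :=
    Real.tendsto_log_atTop.comp hlog
  -- eventual conditions
  have hE1 : ∀ᶠ n : ℕ in Filter.atTop, 1 ≤ Real.log n := hlog.eventually_ge_atTop 1
  have hE2 : ∀ᶠ n : ℕ in Filter.atTop, 2*|c| ≤ Real.log (Real.log n) :=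
    hloglog.eventually_ge_atTop _
  have hE5 : ∀ᶠ n : ℕ in Filter.atTop, ε⁻¹ ^ ((5:ℝ)/2) ≤ Real.log n :=
    hlog.eventually_ge_atTop _
  have hE6 : ∀ᶠ n : ℕ in Filter.atTop, A * B ≤ ε * Real.log n := by
    filter_upwards [hlog.eventually_ge_atTop (A*B/ε)] with n hn
    rw [div_le_iff₀ hε0] at hn; linarith only [hn]
  have hE4 : ∀ᶠ n : ℕ in Filter.atTop, (k:ℝ) ≤ ε * (n:ℝ) := by
    filter_upwards [tendsto_natCast_atTop_atTop.eventually_ge_atTop ((k:ℝ)/ε)] with n hn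
    rw [div_le_iff₀ hε0] at hn; linarith only [hn]
  have hE3 : ∀ᶠ n : ℕ in Filter.atTop,
      ((k:ℝ)/2+1) * Real.log n + ((k:ℝ)/2) * Real.log (Real.log n) + c < (n:ℝ) := by
    have h₁ : (fun r : ℝ => ((k:ℝ)+1) * Real.log r) =o[Filter.atTop] (fun r : ℝ => r) :=
      Real.isLittleO_log_id_atTop.const_mul_left ((k:ℝ)+1)
    have h₂ := h₁.bound (show (0:ℝ) < 1/2 by norm_num)
    have h₃ : ∀ᶠ r : ℝ in Filter.atTop,
        ((k:ℝ)/2+1) * Real.log r + ((k:ℝ)/2) * Real.log (Real.log r) + c < r := by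
      filter_upwards [h₂, Filter.eventually_ge_atTop (max 3 (2*|c|+1))] with r hr hr3
      have hr3' : (3:ℝ) ≤ r := le_trans (le_max_left _ _) hr3
      have hrc : 2*|c|+1 ≤ r := le_trans (le_max_right _ _) hr3
      have hr0 : (0:ℝ) < r := by linarith only [hr3']
      have hlr1 : (1:ℝ) ≤ Real.log r := by
        rw [Real.le_log_iff_exp_le hr0]
        calc Real.exp 1 ≤ 2.7182818286 := (Real.exp_one_lt_d9).le
          _ ≤ r := by norm_num; linarith only [hr3']
      have hllr : Real.log (Real.log r) ≤ Real.log r := by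
        apply Real.log_le_log (by linarith only [hlr1])
        calc Real.log r ≤ r - 1 := Real.log_le_sub_one_of_pos hr0
          _ ≤ r := by linarith only []
      have habs : ((k:ℝ)+1) * Real.log r ≤ (1/2) * r := by
        calc ((k:ℝ)+1) * Real.log r ≤ |((k:ℝ)+1) * Real.log r| := le_abs_self _
          _ ≤ 1/2 * |r| := hr
          _ = 1/2 * r := by rw [abs_of_nonneg hr0.le]
      have hcr : |c| ≤ (r-1)/2 := by linarith only [hrc]
      have hc1 : c ≤ |c| := le_abs_self c
      have hK2 : (0:ℝ) ≤ (k:ℝ)/2 := by linarith only [hK1]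
      have hm' := mul_le_mul_of_nonneg_left hllr hK2
      linarith only [habs, hcr, hc1, hm']
    exact tendsto_natCast_atTop_atTop.eventually h₃
  have key : ∀ᶠ n : ℕ in Filter.atTop,
      (tc k c n ∈ Set.Ioo (0 : ℝ) 1 ∧
      ∀ m : ℕ, 1 ≤ m → ∀ t : ℝ, tc k c n ≤ t → t ≤ 1 →
        t < A * Real.log m / m →
        (m : ℝ) < ((n : ℝ) - k) * t ^ k - (((n : ℝ) - k) * t ^ k) ^ ((3 : ℝ) / 5)) := by
    filter_upwards [hE1, hE2, hE3, hE4, hE5, hE6, Filter.eventually_ge_atTop 3]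
      with n h1 h2 h3 h4 h5 h6 hn3
    set x : ℝ := Real.log n with hxdef
    set y : ℝ := Real.log x with hydef
    have hx1 : 1 ≤ x := h1
    have hx0 : 0 < x := by linarith only [hx1]
    have hn3' : (3:ℝ) ≤ (n:ℝ) := by exact_mod_cast hn3
    have hn0 : (0:ℝ) < (n:ℝ) := by linarith only [hn3']
    set Lnum : ℝ := ((k:ℝ)/2+1) * x + ((k:ℝ)/2) * y + c with hLdef
    have hy0 : 0 ≤ y := le_trans (by positivity) h2
    have hyc : 0 ≤ (k:ℝ)/2 * y + c := by
      have h' : y/2 ≤ (k:ℝ)/2 * y := by nlinarith only [hK1, hy0]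
      have hc : -|c| ≤ c := neg_abs_le c
      linarith only [h', hc, h2]
    have hLx : ((k:ℝ)/2+1) * x ≤ Lnum := by
      simp only [hLdef]; linarith only [hyc]
    have h15 : (1:ℝ) ≤ ((k:ℝ)/2+1) * x := by nlinarith only [hK1, hx1]
    have hL1 : 1 ≤ Lnum := le_trans h15 hLx
    have hLn : Lnum < (n:ℝ) := h3
    have hq0 : 0 < Lnum / n := div_pos (by linarith only [hL1]) hn0
    have hq1 : Lnum / n < 1 := (div_lt_one hn0).mpr hLn
    have htc_eq : tc k c n = (Lnum / n) ^ ((1:ℝ)/((k:ℝ)+1)) := by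
      unfold tc; rw [hLdef, hydef, hxdef]
    have htc_pos : 0 < tc k c n := by rw [htc_eq]; exact Real.rpow_pos_of_pos hq0 _
    have htc_lt1 : tc k c n < 1 := by
      rw [htc_eq]; exact Real.rpow_lt_one hq0.le hq1 (by positivity)
    refine ⟨⟨htc_pos, htc_lt1⟩, ?_⟩
    intro m hm t htcle ht1 hmt
    have ht0 : 0 < t := lt_of_lt_of_le htc_pos htcle
    have hm0 : (0:ℝ) < (m:ℝ) := by exact_mod_cast hm
    -- t^(k+1) ≥ Lnum/n
    have htcpow : tc k c n ^ (k+1) = Lnum / n := by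
      rw [htc_eq, ← Real.rpow_natCast ((Lnum/(n:ℝ)) ^ ((1:ℝ)/((k:ℝ)+1))) (k+1),
        ← Real.rpow_mul hq0.le]
      have hk0 : ((k:ℝ)+1) ≠ 0 := by positivity
      have hcast : ((k+1:ℕ):ℝ) = (k:ℝ)+1 := by push_cast; ring
      have he : (1:ℝ)/((k:ℝ)+1) * ((k+1:ℕ):ℝ) = 1 := by
        rw [hcast, one_div, inv_mul_cancel₀ hk0]
      rw [he, Real.rpow_one]
    have htk1 : Lnum / n ≤ t ^ (k+1) := by
      rw [← htcpow]; exact pow_le_pow_left₀ htc_pos.le htcle _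
    have hnt : Lnum ≤ (n:ℝ) * t ^ (k+1) := by
      rw [div_le_iff₀ hn0] at htk1; linarith only [htk1]
    -- log m > 0
    have hmt' : t * (m:ℝ) < A * Real.log m := (lt_div_iff₀ hm0).mp hmt
    have hlogm_pos : 0 < Real.log m := by
      nlinarith only [hmt', mul_pos ht0 hm0, hA0]
    -- log(1/t) bound
    have hlogt : -Real.log t ≤ x / ((k:ℝ)+1) := by
      have h1n : (1:ℝ)/n ≤ t^(k+1) :=
        le_trans ((div_le_div_iff_of_pos_right hn0).mpr hL1) htk1
      have hlog1n := Real.log_le_log (by positivity) h1n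
      rw [Real.log_pow, Real.log_div one_ne_zero hn0.ne', Real.log_one] at hlog1n
      have hK10 : (0:ℝ) < (k:ℝ) + 1 := by positivity
      rw [le_div_iff₀ hK10]
      have hcast : ((k+1 : ℕ) : ℝ) = (k:ℝ) + 1 := by push_cast; ring
      rw [hcast] at hlog1n
      linarith only [hlog1n]
    -- log log m ≤ ε log m + log ε⁻¹
    have hll : Real.log (Real.log m) ≤ ε * Real.log m + Real.log ε⁻¹ := by
      have heq : Real.log (ε * Real.log m) = Real.log ε + Real.log (Real.log m) :=
        Real.log_mul hε0.ne' hlogm_pos.ne'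
      have hb := Real.log_le_sub_one_of_pos (mul_pos hε0 hlogm_pos)
      rw [Real.log_inv]
      linarith only [heq, hb]
    -- log m upper bound
    have hmlt : (m:ℝ) < A * Real.log m / t := by
      rw [lt_div_iff₀ ht0]; linarith only [hmt']
    have hlogmlt : Real.log m < Real.log A + Real.log (Real.log m) - Real.log t := by
      have h' := Real.log_lt_log hm0 hmlt
      rwa [Real.log_div (by positivity) ht0.ne', Real.log_mul hA0.ne' hlogm_pos.ne'] at h'
    have hε1 : ε < 1 := by linarith only [hε4]
    set Q : ℝ := (B + x/((k:ℝ)+1)) / (1-ε) with hQdef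
    have hlogm_le : Real.log m ≤ Q := by
      rw [hQdef, le_div_iff₀ (by linarith only [hε4] : (0:ℝ) < 1 - ε)]
      simp only [hBdef]
      linarith only [hll, hlogmlt, hlogt]
    -- m < A * Q / t
    have hmQ : (m:ℝ) < A * Q / t :=
      hmlt.trans_le ((div_le_div_iff_of_pos_right ht0).mpr
        (mul_le_mul_of_nonneg_left hlogm_le hA0.le))
    -- μ lower bounds
    set μ : ℝ := ((n:ℝ) - (k:ℝ)) * t^k with hμdef
    have htk0 : 0 < t^k := pow_pos ht0 k
    have hμLB : (1-ε) * (Lnum / t) ≤ μ := by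
      have hnk : (1-ε) * (n:ℝ) ≤ (n:ℝ) - (k:ℝ) := by linarith only [h4]
      have h1' : Lnum / t ≤ (n:ℝ) * t^k := by
        rw [div_le_iff₀ ht0]
        calc Lnum ≤ (n:ℝ) * t^(k+1) := hnt
          _ = (n:ℝ) * t^k * t := by rw [pow_succ]; ring
      calc (1-ε) * (Lnum / t) ≤ (1-ε) * ((n:ℝ) * t^k) :=
            mul_le_mul_of_nonneg_left h1' (by linarith only [hε1])
        _ ≤ ((n:ℝ) - (k:ℝ)) * t^k := by
            rw [← mul_assoc]; exact mul_le_mul_of_nonneg_right hnk htk0.le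
    have hLt : Lnum ≤ Lnum / t := by
      rw [le_div_iff₀ ht0]
      have := mul_le_mul_of_nonneg_left ht1 (by linarith only [hL1] : (0:ℝ) ≤ Lnum)
      linarith only [this]
    have hμx : x ≤ μ := by
      have hb1 : (3:ℝ)/4 ≤ 1-ε := by linarith only [hε4]
      have hb2 : (3:ℝ)/2 ≤ (k:ℝ)/2+1 := by linarith only [hK1]
      have huv : (9:ℝ)/8 ≤ (1-ε)*((k:ℝ)/2+1) := by nlinarith only [hb1, hb2]
      have hxw : x ≤ ((1-ε)*((k:ℝ)/2+1))*x := by nlinarith only [huv, hx1]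
      have a2 := mul_le_mul_of_nonneg_left hLx (by linarith only [hε1] : (0:ℝ) ≤ 1-ε)
      have a1 := mul_le_mul_of_nonneg_left hLt (by linarith only [hε1] : (0:ℝ) ≤ 1-ε)
      linarith only [hxw, a2, a1, hμLB]
    have hμbig : ε⁻¹ ^ ((5:ℝ)/2) ≤ μ := le_trans h5 hμx
    have hμ0 : 0 < μ := lt_of_lt_of_le (by positivity) hμbig
    -- μ^(3/5) ≤ ε μ
    have hμ35 : μ ^ ((3:ℝ)/5) ≤ ε * μ := by
      have h25 : ε⁻¹ ≤ μ ^ ((2:ℝ)/5) := by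
        have h' := Real.rpow_le_rpow (by positivity) hμbig (by norm_num : (0:ℝ) ≤ 2/5)
        rwa [← Real.rpow_mul (by positivity), show (5:ℝ)/2 * (2/5) = 1 by norm_num,
          Real.rpow_one] at h'
      have hsplit : μ = μ ^ ((2:ℝ)/5) * μ ^ ((3:ℝ)/5) := by
        rw [← Real.rpow_add hμ0]; norm_num
      have hεa : 1 ≤ ε * μ ^ ((2:ℝ)/5) := by
        calc (1:ℝ) = ε * ε⁻¹ := (mul_inv_cancel₀ hε0.ne').symm
          _ ≤ ε * μ ^ ((2:ℝ)/5) := mul_le_mul_of_nonneg_left h25 hε0.le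
      have hb0 : 0 ≤ μ ^ ((3:ℝ)/5) := Real.rpow_nonneg hμ0.le _
      calc μ ^ ((3:ℝ)/5) = 1 * μ ^ ((3:ℝ)/5) := (one_mul _).symm
        _ ≤ (ε * μ ^ ((2:ℝ)/5)) * μ ^ ((3:ℝ)/5) := mul_le_mul_of_nonneg_right hεa hb0
        _ = ε * (μ ^ ((2:ℝ)/5) * μ ^ ((3:ℝ)/5)) := by ring
        _ = ε * μ := by rw [← hsplit]
    -- final comparison
    have hθε : θ = 1 - 4*ε := by simp only [hεdef]; ring
    have hcube : ε ≤ (1-ε)^3 - θ := by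
      rw [hθε]; nlinarith only [hε0, hε4, mul_pos hε0 hε0]
    have hAx : A * (x/((k:ℝ)+1)) = θ * (((k:ℝ)/2+1) * x) := by
      have hk0 : ((k:ℝ)+1) ≠ 0 := by positivity
      have hk0' : ((k:ℝ)/2+1) ≠ 0 := by positivity
      rw [hθdef]; field_simp
    have hKh : (0:ℝ) ≤ ((k:ℝ)/2+1)*x := by positivity
    have goal' : A * B + θ * (((k:ℝ)/2+1) * x) ≤ (1-ε)^3 * (((k:ℝ)/2+1)*x) := by
      have hxkx : x ≤ ((k:ℝ)/2+1) * x := by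
        have hkx : (0:ℝ) ≤ (k:ℝ) * x := mul_nonneg (le_trans zero_le_one hK1) hx0.le
        linarith only [hkx]
      have step1 : A * B ≤ ε * (((k:ℝ)/2+1) * x) :=
        h6.trans (mul_le_mul_of_nonneg_left hxkx hε0.le)
      have step2 := mul_le_mul_of_nonneg_right
        (by linarith only [hcube] : θ + ε ≤ (1-ε)^3) hKh
      linarith only [step1, step2]
    have hfinal2 : A * Q ≤ (1-ε)^2 * (((k:ℝ)/2+1)*x) := by
      rw [hQdef, ← mul_div_assoc, div_le_iff₀ (by linarith only [hε4] : (0:ℝ) < 1 - ε)]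
      calc A * (B + x/((k:ℝ)+1)) = A*B + θ * (((k:ℝ)/2+1)*x) := by rw [← hAx]; ring
        _ ≤ (1-ε)^3 * (((k:ℝ)/2+1)*x) := goal'
        _ = (1-ε)^2 * (((k:ℝ)/2+1)*x) * (1-ε) := by ring
    have hchain : (1-ε)^2 * Lnum / t ≤ μ - μ^((3:ℝ)/5) := by
      have he1 : (1-ε)^2 * Lnum / t = (1-ε) * ((1-ε) * (Lnum/t)) := by ring
      have he2 : (1-ε) * ((1-ε)*(Lnum/t)) ≤ (1-ε)*μ :=
        mul_le_mul_of_nonneg_left hμLB (by linarith only [hε1])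
      rw [he1]; linarith only [hμ35, he2]
    calc (m:ℝ) < A*Q/t := hmQ
      _ ≤ (1-ε)^2*(((k:ℝ)/2+1)*x)/t := (div_le_div_iff_of_pos_right ht0).mpr hfinal2
      _ ≤ (1-ε)^2*Lnum/t := by
          exact (div_le_div_iff_of_pos_right ht0).mpr (mul_le_mul_of_nonneg_left hLx (sq_nonneg (1-ε)))
      _ ≤ μ - μ^((3:ℝ)/5) := hchain
  obtain ⟨n₀, hn₀⟩ := Filter.eventually_atTop.mp key
  exact ⟨n₀, fun n hn => hn₀ n hn⟩
end

section
/- Let G be a simple graph on a finite vertex set V with |V| = N, let m ≥ 1 be an integer, and suppose every vertex of G has degree at least m+1. Suppose there exists S₀ ⊆ V with |S₀| ≤ m such that the induced subgraph of G on V ∖ S₀ is disconnected (has at least two connected components). Then there exist disjoint subsets S, T ⊆ V with |S| ≤ m, m − |S| + 2 ≤ |T| ≤ (N − |S|)/2, such that T is the vertex set of a connected component of the induced subgraph of G on V ∖ S. -/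
/-- Let `G` be a simple graph on a finite vertex set `V` with `|V| = N`,
`m ≥ 1`, every vertex of degree at least `m+1`. If removing some set `S₀` of at most `m`
vertices disconnects `G` (the induced graph on the complement has at least two connected
components), then there are disjoint sets `S, T` with `|S| ≤ m`,
`m − |S| + 2 ≤ |T| ≤ (N − |S|)/2`, such that `T` is the vertex set of a connected
component of the induced subgraph on `V ∖ S`. -/
theorem exists_small_separated_component {V : Type*} [Fintype V] [DecidableEq V]
    (G : SimpleGraph V) [DecidableRel G.Adj] (N m : ℕ)
    (hN : Fintype.card V = N) (hm : 1 ≤ m)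
    (hdeg : ∀ v : V, m + 1 ≤ G.degree v)
    (S₀ : Finset V) (hS₀ : S₀.card ≤ m)
    (hdisc : 2 ≤ Nat.card (SimpleGraph.ConnectedComponent
      (SimpleGraph.induce ((↑S₀ : Set V)ᶜ) G))) :
    ∃ S T : Finset V, Disjoint S T ∧ S.card ≤ m ∧
      m - S.card + 2 ≤ T.card ∧ (T.card : ℝ) ≤ ((N : ℝ) - S.card) / 2 ∧
      ∃ C : SimpleGraph.ConnectedComponent (SimpleGraph.induce ((↑S : Set V)ᶜ) G),
        (↑T : Set V) = Subtype.val '' C.supp := by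
  classical
  set Gi := SimpleGraph.induce ((↑S₀ : Set V)ᶜ) G with hGi
  -- two distinct components
  have hnt : Nontrivial Gi.ConnectedComponent := by
    by_contra h
    rw [not_nontrivial_iff_subsingleton] at h
    rcases isEmpty_or_nonempty Gi.ConnectedComponent with he | hne
    · rw [Nat.card_of_isEmpty] at hdisc; omega
    · have := Nat.card_eq_one_iff_unique.mpr ⟨h, hne⟩; omega
  obtain ⟨C₁, C₂, hCne⟩ := hnt
  -- Finset versions of supports
  let F : Gi.ConnectedComponent → Finset V :=
    fun C => (C.supp.toFinset).image Subtype.val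
  have hFcard : ∀ C : Gi.ConnectedComponent, (F C).card = C.supp.toFinset.card := by
    intro C
    exact Finset.card_image_of_injective _ Subtype.val_injective
  have hmemF : ∀ (C : Gi.ConnectedComponent) (x : {v : V // v ∈ ((↑S₀ : Set V)ᶜ)}),
      x ∈ C.supp → (x : V) ∈ F C := by
    intro C x hx
    exact Finset.mem_image.mpr ⟨x, Set.mem_toFinset.mpr hx, rfl⟩
  -- lower bound on the size of every component
  have key : ∀ C : Gi.ConnectedComponent, m - S₀.card + 2 ≤ (F C).card := by
    intro C
    obtain ⟨v, hv⟩ := C.exists_rep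
    have hvsupp : v ∈ C.supp := by
      rw [SimpleGraph.ConnectedComponent.mem_supp_iff]; exact hv
    -- neighbors of v outside S₀
    set Nv : Finset V := G.neighborFinset (v : V) \ S₀ with hNv
    have hNvcard : G.degree (v : V) ≤ Nv.card + S₀.card := by
      rw [hNv, ← SimpleGraph.card_neighborFinset_eq_degree]
      exact Finset.card_le_card_sdiff_add_card
    have hsub : insert (v : V) Nv ⊆ F C := by
      intro w hw
      rcases Finset.mem_insert.mp hw with h | h
      · subst h; exact hmemF C v hvsupp
      · rcases Finset.mem_sdiff.mp h with ⟨hadj, hwS₀⟩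
        have hwc : w ∈ ((↑S₀ : Set V)ᶜ) := by simpa using hwS₀
        have hadj' : Gi.Adj v ⟨w, hwc⟩ := by
          simp only [hGi, SimpleGraph.comap_adj, Function.Embedding.coe_subtype]
          exact (SimpleGraph.mem_neighborFinset _ _ _).mp hadj
        have : (⟨w, hwc⟩ : {v : V // v ∈ ((↑S₀ : Set V)ᶜ)}) ∈ C.supp := by
          rw [SimpleGraph.ConnectedComponent.mem_supp_iff, ← hv]
          exact (SimpleGraph.ConnectedComponent.connectedComponentMk_eq_of_adj hadj'.symm)
        exact hmemF C _ this
    have hvnot : (v : V) ∉ Nv := by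
      intro h
      exact G.irrefl ((SimpleGraph.mem_neighborFinset _ _ _).mp (Finset.mem_sdiff.mp h).1)
    have hcard := Finset.card_le_card hsub
    rw [Finset.card_insert_of_notMem hvnot] at hcard
    have hdv := hdeg (v : V)
    omega
  -- the two supports are disjoint finsets in the subtype
  have hdisj : Disjoint C₁.supp.toFinset C₂.supp.toFinset := by
    rw [Finset.disjoint_left]
    intro x hx₁ hx₂
    rw [Set.mem_toFinset, SimpleGraph.ConnectedComponent.mem_supp_iff] at hx₁ hx₂
    exact hCne (hx₁ ▸ hx₂.symm ▸ rfl)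
  have hsum : C₁.supp.toFinset.card + C₂.supp.toFinset.card ≤ N - S₀.card := by
    have hle : (C₁.supp.toFinset ∪ C₂.supp.toFinset).card ≤
        Fintype.card {v : V // v ∈ ((↑S₀ : Set V)ᶜ)} := Finset.card_le_univ _
    rw [Finset.card_union_of_disjoint hdisj] at hle
    have hcc : Fintype.card {v : V // v ∈ ((↑S₀ : Set V)ᶜ)} = N - S₀.card := by
      rw [Fintype.card_subtype]
      have heq : Finset.filter (fun v => v ∈ ((↑S₀ : Set V)ᶜ)) Finset.univ = S₀ᶜ := by
        ext x; simp
      rw [heq, Finset.card_compl, hN]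
    omega
  have hS₀N : S₀.card ≤ N := by
    rw [← hN]; exact Finset.card_le_univ _
  -- pick the smaller component
  rcases le_total C₁.supp.toFinset.card C₂.supp.toFinset.card with hle | hle
  · refine ⟨S₀, F C₁, ?_, hS₀, key C₁, ?_, C₁, ?_⟩
    · rw [Finset.disjoint_right]
      intro x hx
      rcases Finset.mem_image.mp hx with ⟨y, _, rfl⟩
      exact fun hmem => y.2 hmem
    · have h2 : 2 * (F C₁).card + S₀.card ≤ N := by rw [hFcard]; omega
      have := hS₀N
      push_cast
      rw [le_div_iff₀ (by norm_num : (0:ℝ) < 2)]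
      have : ((2 * (F C₁).card + S₀.card : ℕ) : ℝ) ≤ (N : ℝ) := by exact_mod_cast h2
      push_cast at this
      linarith
    · simp [F, Set.coe_toFinset]
  · refine ⟨S₀, F C₂, ?_, hS₀, key C₂, ?_, C₂, ?_⟩
    · rw [Finset.disjoint_right]
      intro x hx
      rcases Finset.mem_image.mp hx with ⟨y, _, rfl⟩
      exact fun hmem => y.2 hmem
    · have h2 : 2 * (F C₂).card + S₀.card ≤ N := by rw [hFcard]; omega
      have := hS₀N
      push_cast
      rw [le_div_iff₀ (by norm_num : (0:ℝ) < 2)]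
      have : ((2 * (F C₂).card + S₀.card : ℕ) : ℝ) ≤ (N : ℝ) := by exact_mod_cast h2
      push_cast at this
      linarith
    · simp [F, Set.coe_toFinset]
end
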